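/- arXiv:1605.02854 — 7 statements merged into one kernel-verified Lean document; each statement's English description precedes it below -/
import Mathlib

section
/- Let p : Y → X be a regular covering map between length spaces which is a local isometry, with deck group G acting by isometries of Y. Fix ỹ ∈ Y, suppose that L := min{ d_Y(ỹ, h·ỹ) : h ∈ G, h ≠ 1 } exists, is positive, and is attained by some g ∈ G, and let γ̃ : [0,L] → Y be a unit-speed minimizing geodesic from ỹ to g·ỹ (so d_Y(γ̃(s),γ̃(t)) = |s−t|). Then the projected loop γ := p ∘ γ̃ is halfway minimizing: d_X(γ(0), γ(L/2)) = L/2. -/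
open Set Metric

/-- The length of a curve `γ : ℝ → X`, over the interval `[0,1]`, as its total variation. -/
noncomputable def pathLength {X : Type*} [MetricSpace X] (γ : ℝ → X) : ENNReal :=
  eVariationOn γ (Set.Icc 0 1)

/-- A metric space is a length space if the distance between any two points equals the
infimum of the lengths of continuous paths joining them. -/
def IsLengthSpace (X : Type*) [MetricSpace X] : Prop :=
  ∀ x y : X,
    edist x y =
      ⨅ γ : {γ : ℝ → X // ContinuousOn γ (Set.Icc 0 1) ∧ γ 0 = x ∧ γ 1 = y},
        pathLength γ.1

/-- A map between metric spaces is a local isometry if every point has a neighborhood on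
which the map preserves distances (an isometry onto its image). -/
def IsLocalIsometry {Y X : Type*} [MetricSpace Y] [MetricSpace X] (f : Y → X) : Prop :=
  ∀ y : Y, ∃ ε > 0, ∀ a ∈ ball y ε, ∀ b ∈ ball y ε, dist (f a) (f b) = dist a b

section Aux

variable {Y X Z : Type*} [MetricSpace Y] [MetricSpace X] [MetricSpace Z]

/-- Congruence for variation: two curves with pairwise equal distances of values have the
same variation. -/
lemma evar_congr_aux (f : ℝ → Y) (g : ℝ → X) (s : Set ℝ)
    (h : ∀ u ∈ s, ∀ v ∈ s, edist (f u) (f v) = edist (g u) (g v)) :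
    eVariationOn f s ≤ eVariationOn g s := by
  unfold eVariationOn
  apply iSup_le
  rintro ⟨n, u, hu, us⟩
  calc
    ∑ i ∈ Finset.range n, edist (f (u (i + 1))) (f (u i))
        = ∑ i ∈ Finset.range n, edist (g (u (i + 1))) (g (u i)) :=
      Finset.sum_congr rfl fun i _ => h _ (us _) _ (us _)
    _ ≤ eVariationOn g s := eVariationOn.sum_le (f := g) (n := n) hu us

lemma evar_congr (f : ℝ → Y) (g : ℝ → X) (s : Set ℝ)
    (h : ∀ u ∈ s, ∀ v ∈ s, edist (f u) (f v) = edist (g u) (g v)) :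
    eVariationOn f s = eVariationOn g s :=
  le_antisymm (evar_congr_aux f g s h)
    (evar_congr_aux g f s fun u hu v hv => (h u hu v hv).symm)

/-- Variation bound for a Lipschitz-type estimate on an interval. -/
lemma evar_le_const (f : ℝ → Y) (a b C : ℝ) (hC : 0 ≤ C)
    (h : ∀ u ∈ Icc a b, ∀ v ∈ Icc a b, u ≤ v → dist (f u) (f v) ≤ C * (v - u)) :
    eVariationOn f (Icc a b) ≤ ENNReal.ofReal (C * (b - a)) := by
  unfold eVariationOn
  apply iSup_le
  rintro ⟨n, u, hu, us⟩
  calc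
    ∑ i ∈ Finset.range n, edist (f (u (i + 1))) (f (u i))
        ≤ ∑ i ∈ Finset.range n, ENNReal.ofReal (C * (u (i + 1) - u i)) := by
      refine Finset.sum_le_sum fun i _ => ?_
      rw [edist_dist, dist_comm]
      exact ENNReal.ofReal_le_ofReal (h _ (us i) _ (us (i + 1)) (hu (Nat.le_succ i)))
    _ = ENNReal.ofReal (∑ i ∈ Finset.range n, C * (u (i + 1) - u i)) := by
      rw [ENNReal.ofReal_sum_of_nonneg]
      intro i _
      exact mul_nonneg hC (sub_nonneg.2 (hu (Nat.le_succ i)))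
    _ ≤ ENNReal.ofReal (C * (b - a)) := by
      apply ENNReal.ofReal_le_ofReal
      rw [← Finset.mul_sum, Finset.sum_range_sub (fun i => u i)]
      have h1 := (us 0).1
      have h2 := (us n).2
      have h3 := (us 0).2
      have h4 := (us n).1
      nlinarith

/-- Lebesgue-number-type lemma: a continuous curve on a compact interval admits a modulus
`δ` such that every subinterval of length at most `δ` is mapped into one of the prescribed
good open sets. -/
lemma exists_fine_delta {a b : ℝ} (hab : a ≤ b) (γ : ℝ → Y)
    (hγ : ContinuousOn γ (Icc a b)) (Q : Set Y → Prop)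
    (hQ : ∀ t : Icc a b, ∃ U, IsOpen U ∧ γ t ∈ U ∧ Q U) :
    ∃ δ > 0, ∀ c d : ℝ, a ≤ c → c ≤ d → d ≤ b → d - c ≤ δ →
      ∃ U, Q U ∧ ∀ u ∈ Icc c d, γ u ∈ U := by
  choose U hUopen hUmem hUQ using hQ
  have hr : ∀ t : Icc a b, ∃ r > 0, ∀ u ∈ Icc a b, |u - (t : ℝ)| < r → γ u ∈ U t := by
    intro t
    have ht : γ ⁻¹' U t ∈ nhdsWithin (t : ℝ) (Icc a b) :=
      (hγ t t.2).preimage_mem_nhdsWithin ((hUopen t).mem_nhds (hUmem t))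
    rw [Metric.mem_nhdsWithin_iff] at ht
    obtain ⟨r, hr, hsub⟩ := ht
    refine ⟨r, hr, fun u hu hur => ?_⟩
    exact hsub ⟨by simpa [Real.dist_eq] using hur, hu⟩
  choose r hrpos hrsub using hr
  have hcover : Icc a b ⊆ ⋃ t : Icc a b, ball (t : ℝ) (r t / 2) := by
    intro s hs
    exact mem_iUnion.2 ⟨⟨s, hs⟩, by simpa using half_pos (hrpos ⟨s, hs⟩)⟩
  obtain ⟨F, hF⟩ := isCompact_Icc.elim_finite_subcover
    (fun t : Icc a b => ball (t : ℝ) (r t / 2)) (fun t => isOpen_ball) hcover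
  have haF : ∃ j ∈ F, a ∈ ball (j : ℝ) (r j / 2) := by
    have := hF ⟨le_refl a, hab⟩
    simpa using this
  obtain ⟨j0, hj0, _⟩ := haF
  have hFne : F.Nonempty := ⟨j0, hj0⟩
  set δ := F.inf' hFne (fun t => r t / 2) with hδdef
  have hδpos : 0 < δ := by
    rw [hδdef, Finset.lt_inf'_iff]
    exact fun t _ => half_pos (hrpos t)
  refine ⟨δ, hδpos, fun c d hac hcd hdb hlen => ?_⟩
  have hcmem : c ∈ Icc a b := ⟨hac, le_trans hcd hdb⟩
  have := hF hcmem
  rw [mem_iUnion₂] at this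
  obtain ⟨j, hj, hcball⟩ := this
  refine ⟨U j, hUQ j, fun u hu => ?_⟩
  have huab : u ∈ Icc a b := ⟨le_trans hac hu.1, le_trans hu.2 hdb⟩
  apply hrsub j u huab
  have h1 : |u - c| ≤ δ := by
    rw [abs_of_nonneg (by linarith [hu.1])]
    linarith [hu.2]
  have h2 : |c - (j : ℝ)| < r j / 2 := by simpa [Real.dist_eq] using hcball
  have h3 : δ ≤ r j / 2 := Finset.inf'_le _ hj
  calc |u - (j : ℝ)| ≤ |u - c| + |c - (j : ℝ)| := abs_sub_le _ _ _
    _ < r j := by linarith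

/-- A local isometry preserves the variation of continuous curves. -/
lemma evar_comp_eq (f : Y → X) (hf : IsLocalIsometry f) {a b : ℝ} (hab : a ≤ b)
    (γ : ℝ → Y) (hγ : ContinuousOn γ (Icc a b)) :
    eVariationOn (fun t => f (γ t)) (Icc a b) = eVariationOn γ (Icc a b) := by
  obtain ⟨δ, hδ, hfine⟩ := exists_fine_delta hab γ hγ
    (fun U => ∀ y1 ∈ U, ∀ y2 ∈ U, dist (f y1) (f y2) = dist y1 y2)
    (fun t => by
      obtain ⟨ε, hε, hball⟩ := hf (γ t)
      exact ⟨ball (γ t) ε, isOpen_ball, mem_ball_self hε, hball⟩)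
  suffices H : ∀ n : ℕ, ∀ c d : ℝ, a ≤ c → c ≤ d → d ≤ b → d - c ≤ n * δ →
      eVariationOn (fun t => f (γ t)) (Icc c d) = eVariationOn γ (Icc c d) by
    obtain ⟨n, hn⟩ := exists_nat_ge ((b - a) / δ)
    refine H n a b le_rfl hab le_rfl ?_
    rw [div_le_iff₀ hδ] at hn
    linarith
  intro n
  induction n with
  | zero =>
    intro c d hc hcd hd h0
    have hcd' : c = d := le_antisymm hcd (by simpa using h0)
    subst hcd'
    rw [Icc_self]
    rw [eVariationOn.subsingleton _ (Set.subsingleton_singleton),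
      eVariationOn.subsingleton _ (Set.subsingleton_singleton)]
  | succ n ih =>
    intro c d hc hcd hd hlen
    set e := max c (d - δ) with hedef
    have hce : c ≤ e := le_max_left _ _
    have hed : e ≤ d := max_le hcd (by linarith)
    have hde : d - e ≤ δ := by
      have : d - δ ≤ e := le_max_right _ _
      linarith
    have hec : e - c ≤ n * δ := by
      rcases max_cases c (d - δ) with ⟨h1, _⟩ | ⟨h1, _⟩
      · rw [hedef, h1]
        simp only [sub_self]
        positivity
      · rw [hedef, h1]
        push_cast at hlen
        linarith
    have s1 : eVariationOn (fun t => f (γ t)) (Icc c e) + eVariationOn (fun t => f (γ t)) (Icc e d)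
        = eVariationOn (fun t => f (γ t)) (Icc c d) := by
      simpa using eVariationOn.Icc_add_Icc (fun t => f (γ t)) (s := Set.univ) hce hed (mem_univ e)
    have s2 : eVariationOn γ (Icc c e) + eVariationOn γ (Icc e d) = eVariationOn γ (Icc c d) := by
      simpa using eVariationOn.Icc_add_Icc γ (s := Set.univ) hce hed (mem_univ e)
    obtain ⟨U, hUQ, hUmap⟩ := hfine e d (le_trans hc hce) hed hd hde
    have hpiece : eVariationOn (fun t => f (γ t)) (Icc e d) = eVariationOn γ (Icc e d) := by
      apply evar_congr
      intro u hu v hv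
      rw [edist_dist, edist_dist, hUQ _ (hUmap u hu) _ (hUmap v hv)]
    rw [← s1, ← s2, ih c e hc hce (le_trans hed hd) hec, hpiece]

end Aux

section Lift

variable {Y X : Type*} [MetricSpace Y] [MetricSpace X]

/-- Around every point of the base of a covering map, there is an open set admitting
continuous sections through each point of its preimage. -/
lemma exists_section (p : Y → X) (hp : IsCoveringMap p) (x : X) :
    ∃ U : Set X, IsOpen U ∧ x ∈ U ∧ ∀ y : Y, p y ∈ U →
      ∃ gY : X → Y, ContinuousOn gY U ∧ gY (p y) = y ∧ ∀ x' ∈ U, p (gY x') = x' := by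
  have hx := hp x
  by_cases hne : Nonempty (p ⁻¹' {x})
  swap
  · obtain ⟨_, U, hxU, hU, _, H, _⟩ := hx
    refine ⟨U, hU, hxU, fun y hy => ?_⟩
    exact (hne ⟨(H ⟨y, hy⟩).2⟩).elim
  obtain ⟨T, hT⟩ : ∃ T : Bundle.Trivialization (p ⁻¹' {x}) p, x ∈ T.baseSet :=
    ⟨_, hx.mem_toTrivialization_baseSet⟩
  refine ⟨T.baseSet, T.open_baseSet, hT, fun y hy => ?_⟩
  have hys : y ∈ T.source := T.mem_source.2 hy
  refine ⟨fun x' => T.toOpenPartialHomeomorph.symm (x', (T y).2), ?_, ?_, ?_⟩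
  · apply T.toOpenPartialHomeomorph.continuousOn_symm.comp
    · exact (continuous_id.prodMk continuous_const).continuousOn
    · intro x' hx'
      exact T.mem_target.2 hx'
  · have h1 : ((p y : X), (T y).2) = T y := by
      refine Prod.ext ?_ rfl
      exact (T.coe_fst hys).symm
    show T.toOpenPartialHomeomorph.symm ((p y : X), (T y).2) = y
    rw [h1]
    exact T.toOpenPartialHomeomorph.left_inv hys
  · intro x' hx'
    exact T.proj_symm_apply (T.mem_target.2 hx')

/-- Discrete chain lifting with metric control: given a continuous curve `σ` in the base
and a point `y0` over `σ 0`, there is a point over `σ 1` whose distance to `y0` is at most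
the variation of `σ`. -/
lemma chain_lift (p : Y → X) (hp : IsCoveringMap p) (hloc : IsLocalIsometry p)
    (σ : ℝ → X) (hσ : ContinuousOn σ (Icc 0 1)) (y0 : Y) (hy0 : p y0 = σ 0) :
    ∃ y1 : Y, p y1 = σ 1 ∧ edist y0 y1 ≤ eVariationOn σ (Icc 0 1) := by
  obtain ⟨δ, hδ, hfine⟩ := exists_fine_delta (by norm_num : (0:ℝ) ≤ 1) σ hσ
    (fun U => ∀ y : Y, p y ∈ U →
      ∃ gY : X → Y, ContinuousOn gY U ∧ gY (p y) = y ∧ ∀ x' ∈ U, p (gY x') = x')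
    (fun t => by
      obtain ⟨U, hUo, hUm, hUQ⟩ := exists_section p hp (σ t)
      exact ⟨U, hUo, hUm, hUQ⟩)
  suffices H : ∀ n : ℕ, ∀ t : ℝ, t ∈ Icc (0:ℝ) 1 → t ≤ n * δ →
      ∃ y : Y, p y = σ t ∧ edist y0 y ≤ eVariationOn σ (Icc 0 t) by
    obtain ⟨n, hn⟩ := exists_nat_ge (1 / δ)
    have h1 : (1:ℝ) ≤ n * δ := by
      rw [div_le_iff₀ hδ] at hn
      linarith
    exact H n 1 ⟨by norm_num, le_refl 1⟩ h1
  intro n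
  induction n with
  | zero =>
    intro t ht ht0
    have : t = 0 := le_antisymm (by simpa using ht0) ht.1
    subst this
    exact ⟨y0, hy0, by simp⟩
  | succ n ih =>
    intro t ht htn
    set e := max 0 (t - δ) with hedef
    have h0e : (0:ℝ) ≤ e := le_max_left _ _
    have het : e ≤ t := max_le ht.1 (by linarith)
    have hte : t - e ≤ δ := by
      have : t - δ ≤ e := le_max_right _ _
      linarith
    have hen : e ≤ n * δ := by
      rcases max_cases 0 (t - δ) with ⟨h1, _⟩ | ⟨h1, _⟩
      · rw [hedef, h1]; positivity
      · rw [hedef, h1]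
        push_cast at htn
        linarith
    obtain ⟨y, hpy, hdy⟩ := ih e ⟨h0e, le_trans het ht.2⟩ hen
    obtain ⟨U, hUQ, hUmap⟩ := hfine e t h0e het ht.2 hte
    have hpyU : p y ∈ U := by
      rw [hpy]
      exact hUmap e ⟨le_refl e, het⟩
    obtain ⟨gY, hgYc, hgYy, hgYs⟩ := hUQ y hpyU
    set g : ℝ → Y := fun s => gY (σ s) with hgdef
    have hsub : Icc e t ⊆ Icc (0:ℝ) 1 := Icc_subset_Icc h0e ht.2
    have hgc : ContinuousOn g (Icc e t) :=
      hgYc.comp (hσ.mono hsub) (fun u hu => hUmap u hu)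
    have hpg : ∀ u ∈ Icc e t, p (g u) = σ u := fun u hu => hgYs _ (hUmap u hu)
    refine ⟨g t, hpg t ⟨het, le_refl t⟩, ?_⟩
    have hge : g e = y := by
      rw [hgdef]
      simp only
      rw [← hpy, hgYy]
    have hvar : eVariationOn g (Icc e t) = eVariationOn σ (Icc e t) := by
      rw [← evar_comp_eq p hloc het g hgc]
      exact evar_congr _ _ _ (fun u hu v hv => by rw [hpg u hu, hpg v hv])
    have hd2 : edist y (g t) ≤ eVariationOn σ (Icc e t) := by
      rw [← hvar, ← hge]
      exact eVariationOn.edist_le g ⟨le_refl e, het⟩ ⟨het, le_refl t⟩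
    have hsplit : eVariationOn σ (Icc 0 e) + eVariationOn σ (Icc e t) =
        eVariationOn σ (Icc 0 t) := by
      have := eVariationOn.Icc_add_Icc σ (s := Set.univ) h0e het (mem_univ e)
      simpa using this
    calc edist y0 (g t) ≤ edist y0 y + edist y (g t) := edist_triangle _ _ _
      _ ≤ eVariationOn σ (Icc 0 e) + eVariationOn σ (Icc e t) := add_le_add hdy hd2
      _ = eVariationOn σ (Icc 0 t) := hsplit

end Lift

/-- The Halfway Lemma: the projection of a minimizing geodesic from `ytil` to `g • ytil`,
where `g` attains the minimal positive displacement `L` of the deck group at `ytil`,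
is a halfway-minimizing loop: `d(γ(0), γ(L/2)) = L/2`. -/
theorem stmt_1 {Y X : Type*} [MetricSpace Y] [MetricSpace X]
    (hY : IsLengthSpace Y) (hX : IsLengthSpace X)
    (p : Y → X) (hp : IsCoveringMap p) (hloc : IsLocalIsometry p)
    (G : Type*) [Group G] [MulAction G Y]
    (hiso : ∀ g : G, Isometry (fun y : Y => g • y))
    (hdeck : ∀ (g : G) (y : Y), p (g • y) = p y)
    (hreg : ∀ y₁ y₂ : Y, p y₁ = p y₂ → ∃ g : G, g • y₁ = y₂)
    (ytil : Y) (L : ℝ) (hLpos : 0 < L)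
    (hmin : IsLeast {d : ℝ | ∃ h : G, h ≠ 1 ∧ d = dist ytil (h • ytil)} L)
    (g : G) (hg : g ≠ 1) (hgL : dist ytil (g • ytil) = L)
    (gam : ℝ → Y)
    (hgeo : ∀ s ∈ Set.Icc (0:ℝ) L, ∀ t ∈ Set.Icc (0:ℝ) L,
      dist (gam s) (gam t) = |s - t|)
    (h0 : gam 0 = ytil) (hL : gam L = g • ytil) :
    dist (p (gam 0)) (p (gam (L / 2))) = L / 2 := by
  have hL2 : (0:ℝ) ≤ L / 2 := by linarith
  have hL2L : L / 2 ≤ L := by linarith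
  -- continuity of gam on [0, L]
  have hgamc : ContinuousOn gam (Icc 0 L) := by
    have : LipschitzOnWith 1 gam (Icc 0 L) := by
      apply LipschitzOnWith.of_dist_le_mul
      intro u hu v hv
      rw [hgeo u hu v hv, Real.dist_eq]
      simp
    exact this.continuousOn
  -- the rescaled half geodesic
  set τ : ℝ → Y := fun t => gam (t * (L / 2)) with hτdef
  have hτmaps : ∀ t ∈ Icc (0:ℝ) 1, t * (L / 2) ∈ Icc 0 L := by
    intro t ht
    constructor
    · exact mul_nonneg ht.1 hL2
    · calc t * (L / 2) ≤ 1 * (L / 2) := mul_le_mul_of_nonneg_right ht.2 hL2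
        _ ≤ L := by linarith
  have hτc : ContinuousOn τ (Icc 0 1) :=
    hgamc.comp (continuous_id.mul continuous_const).continuousOn hτmaps
  have hτ0 : τ 0 = gam 0 := by rw [hτdef]; norm_num
  have hτ1 : τ 1 = gam (L / 2) := by rw [hτdef]; norm_num
  -- upper bound
  have hub : dist (p (gam 0)) (p (gam (L / 2))) ≤ L / 2 := by
    have hle : edist (p (gam 0)) (p (gam (L / 2))) ≤ ENNReal.ofReal (L / 2) := by
      rw [hX (p (gam 0)) (p (gam (L / 2)))]
      refine le_trans (iInf_le _ ⟨fun t => p (τ t), hp.continuous.comp_continuousOn hτc,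
        by show p (τ 0) = p (gam 0); rw [hτ0], by show p (τ 1) = p (gam (L/2)); rw [hτ1]⟩) ?_
      show eVariationOn (fun t => p (τ t)) (Icc 0 1) ≤ _
      rw [evar_comp_eq p hloc (by norm_num) τ hτc]
      have := evar_le_const τ 0 1 (L / 2) hL2 (fun u hu v hv huv => by
        rw [hτdef]
        simp only
        rw [hgeo _ (hτmaps u hu) _ (hτmaps v hv)]
        rw [abs_of_nonpos (by nlinarith)]
        ring_nf
        nlinarith)
      simpa using this
    rw [edist_dist] at hle
    exact (ENNReal.ofReal_le_ofReal_iff hL2).1 hle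
  -- key distance facts
  have hdhalf : dist ytil (gam (L / 2)) = L / 2 := by
    rw [← h0, hgeo 0 ⟨le_refl 0, le_of_lt hLpos⟩ (L / 2) ⟨hL2, hL2L⟩]
    rw [abs_of_nonpos (by linarith)]
    ring
  -- lower bound by contradiction
  refine le_antisymm hub ?_
  by_contra hlt
  push_neg at hlt
  -- choose a short path from p (gam (L/2)) to p (gam 0)
  have hinf := hX (p (gam (L / 2))) (p (gam 0))
  have hedist : edist (p (gam (L / 2))) (p (gam 0)) < ENNReal.ofReal (L / 2) := by
    rw [edist_dist, dist_comm]
    exact (ENNReal.ofReal_lt_ofReal_iff (by linarith)).2 hlt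
  rw [hinf] at hedist
  rw [iInf_lt_iff] at hedist
  obtain ⟨⟨σ, hσc, hσ0, hσ1⟩, hσlen⟩ := hedist
  -- lift the chain starting at gam (L/2)
  obtain ⟨y1, hpy1, hdy1⟩ := chain_lift p hp hloc σ hσc (gam (L / 2)) (by rw [hσ0])
  have hpy1' : p ytil = p y1 := by
    rw [hpy1, hσ1, h0]
  obtain ⟨h, hh⟩ := hreg ytil y1 hpy1'
  have hdist1 : dist (gam (L / 2)) y1 < L / 2 := by
    have : edist (gam (L / 2)) y1 < ENNReal.ofReal (L / 2) :=
      lt_of_le_of_lt hdy1 hσlen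
    rw [edist_dist] at this
    exact (ENNReal.ofReal_lt_ofReal_iff_of_nonneg dist_nonneg).1 this
  by_cases hone : h = 1
  · rw [hone, one_smul] at hh
    rw [← hh] at hdist1
    rw [dist_comm] at hdist1
    rw [hdhalf] at hdist1
    exact lt_irrefl _ hdist1
  · have hmem : dist ytil (h • ytil) ∈
        {d : ℝ | ∃ h : G, h ≠ 1 ∧ d = dist ytil (h • ytil)} := ⟨h, hone, rfl⟩
    have hLle : L ≤ dist ytil (h • ytil) := hmin.2 hmem
    rw [hh] at hLle
    have : dist ytil y1 ≤ dist ytil (gam (L / 2)) + dist (gam (L / 2)) y1 :=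
      dist_triangle _ _ _
    rw [hdhalf] at this
    linarith
end

section
/- Let (Y,d) be a metric space equipped with a Borel measure m, let G be a group acting on Y by measure-preserving surjective isometries, and let p̃ ∈ Y and δ₀ > 0 be such that the balls g·B(p̃,δ₀), for g ∈ G, are pairwise disjoint for distinct elements of G. Fix D > 0 and assume 0 < m(B(p̃,δ₀)) and m(B(p̃, D+δ₀)) < ∞. Then the number of elements g ∈ G with d(p̃, g·p̃) ≤ D is at most m(B(p̃, D+δ₀)) / m(B(p̃, δ₀)). -/
open Set Metric MeasureTheory ENNReal

/-- Packing bound: if a group `G` acts on `(Y, d, m)` by measure-preserving surjective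
isometries and the translates of the ball `B(ptil, δ₀)` are pairwise disjoint, then the
number of `g ∈ G` with `d(ptil, g • ptil) ≤ D` is at most
`m(B(ptil, D + δ₀)) / m(B(ptil, δ₀))`. -/
theorem stmt_2 {Y : Type*} [MetricSpace Y] [MeasurableSpace Y] [BorelSpace Y]
    (m : Measure Y) (G : Type*) [Group G] [MulAction G Y]
    (hiso : ∀ g : G, Isometry (fun y : Y => g • y))
    (hsurj : ∀ g : G, Function.Surjective (fun y : Y => g • y))
    (hmp : ∀ (g : G) (A : Set Y), MeasurableSet A → m ((fun y : Y => g • y) '' A) = m A)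
    (ptil : Y) (δ₀ : ℝ) (hδ₀ : 0 < δ₀)
    (hdisj : Pairwise fun g h : G =>
      Disjoint ((fun y : Y => g • y) '' ball ptil δ₀) ((fun y : Y => h • y) '' ball ptil δ₀))
    (D : ℝ) (hD : 0 < D)
    (hpos : 0 < m (ball ptil δ₀)) (hfin : m (ball ptil (D + δ₀)) < ⊤) :
    {g : G | dist ptil (g • ptil) ≤ D}.Finite ∧
      (Nat.card {g : G | dist ptil (g • ptil) ≤ D} : ℝ≥0∞) ≤
        m (ball ptil (D + δ₀)) / m (ball ptil δ₀) := by
  set c := m (ball ptil δ₀) with hc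
  set M := m (ball ptil (D + δ₀)) with hM
  have himg : ∀ g : G, (fun y : Y => g • y) '' ball ptil δ₀ = ball (g • ptil) δ₀ := by
    intro g
    ext y
    constructor
    · rintro ⟨x, hx, rfl⟩
      simpa [mem_ball, (hiso g).dist_eq] using hx
    · intro hy
      obtain ⟨x, hx⟩ := hsurj g y
      refine ⟨x, ?_, hx⟩
      simp only at hx
      rw [← hx] at hy
      simpa [mem_ball, (hiso g).dist_eq] using hy
  have hcball : ∀ g : G, m (ball (g • ptil) δ₀) = c := by
    intro g
    rw [← himg g]
    exact hmp g _ measurableSet_ball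
  have key : ∀ F : Finset G, (↑F : Set G) ⊆ {g : G | dist ptil (g • ptil) ≤ D} →
      (F.card : ℝ≥0∞) * c ≤ M := by
    intro F hF
    have hd : (↑F : Set G).PairwiseDisjoint (fun g => ball (g • ptil) δ₀) := by
      intro g _ h _ hgh
      have := hdisj hgh
      simpa [himg] using this
    have hsum := measure_biUnion_finset (μ := m) hd (fun g _ => measurableSet_ball)
    calc (F.card : ℝ≥0∞) * c = ∑ g ∈ F, m (ball (g • ptil) δ₀) := by
          simp [hcball, Finset.sum_const, mul_comm]
      _ = m (⋃ g ∈ F, ball (g • ptil) δ₀) := hsum.symm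
      _ ≤ M := by
          apply measure_mono
          intro y hy
          simp only [mem_iUnion, exists_prop] at hy
          obtain ⟨g, hg, hy⟩ := hy
          have hgS : dist ptil (g • ptil) ≤ D := hF hg
          have : dist y ptil ≤ dist y (g • ptil) + dist (g • ptil) ptil :=
            dist_triangle _ _ _
          rw [mem_ball] at hy ⊢
          rw [dist_comm (g • ptil) ptil] at this
          calc dist y ptil ≤ dist y (g • ptil) + dist ptil (g • ptil) := this
            _ < δ₀ + D := by exact add_lt_add_of_lt_of_le hy hgS
            _ = D + δ₀ := by ring
  have hcM : c ≤ M := measure_mono (ball_subset_ball (by linarith))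
  have hcne : c ≠ 0 := hpos.ne'
  have hctop : c ≠ ⊤ := (lt_of_le_of_lt hcM hfin).ne
  have hfinS : {g : G | dist ptil (g • ptil) ≤ D}.Finite := by
    by_contra hinf

    obtain ⟨n, hn⟩ := ENNReal.exists_nat_gt (ENNReal.div_lt_top hfin.ne hcne).ne
    obtain ⟨F, hFsub, hFcard⟩ := Set.Infinite.exists_subset_card_eq hinf n
    have hkey := key F hFsub
    rw [hFcard] at hkey
    have : M < (n : ℝ≥0∞) * c := by
      rwa [ENNReal.div_lt_iff (Or.inl hcne) (Or.inl hctop)] at hn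
    exact absurd hkey (not_le.mpr this)
  refine ⟨hfinS, ?_⟩
  rw [ENNReal.le_div_iff_mul_le (Or.inl hcne) (Or.inl hctop)]
  have hcard : Nat.card {g : G | dist ptil (g • ptil) ≤ D} = hfinS.toFinset.card := by
    rw [Nat.card_eq_card_finite_toFinset]
  rw [hcard]
  exact key hfinS.toFinset (by simp)
end

section
/- Let (Y,d) be a metric space carrying a Borel measure m satisfying the Bishop–Gromov inequality with K = 0 and parameter N ∈ (1,∞), with 0 < m(B(y,r)) < ∞ for every ball. Let G be a group acting on Y by measure-preserving surjective isometries, let y₀ ∈ Y, and let ε > 0 satisfy d(y₀, g·y₀) ≥ 2ε for every g ∈ G with g ≠ 1. Suppose G is generated by a finite set 𝔤 = {g₁,…,gₙ} of nontrivial elements and set L := max_i d(y₀, g_i·y₀). Then |U_𝔤(r)| ≤ ((rL+ε)/ε)^N for every r > 0; in particular, G has polynomial growth of degree at most N. -/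
open Set Metric MeasureTheory ENNReal

/-- The set of elements of `G` expressible as words `g_{α₁}^{i₁} ⋯ g_{α_k}^{i_k}` with each
`g_{α_j}` in the generating set `S` and `Σ_j |i_j| ≤ r`. -/
def wordBall {G : Type*} [Group G] (S : Finset G) (r : ℝ) : Set G :=
  {g | ∃ (k : ℕ) (α : Fin k → G) (i : Fin k → ℤ),
    (∀ j, α j ∈ S) ∧ (((∑ j, |i j| : ℤ) : ℝ) ≤ r) ∧
      g = (List.ofFn fun j => α j ^ (i j)).prod}

/-- Milnor-type growth estimate: in a space satisfying the Bishop–Gromov inequality with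
`K = 0` and parameter `N`, if `G` acts by measure-preserving surjective isometries with
displacement at least `2ε` at `y₀` for nontrivial elements, and `G` is generated by the
finite set `S` of nontrivial elements with maximal displacement `L` at `y₀`, then
`|U_S(r)| ≤ ((rL + ε)/ε)^N` for all `r > 0`; in particular `G` has polynomial growth of
degree at most `N`. -/
theorem stmt_3 {Y : Type*} [MetricSpace Y] [MeasurableSpace Y] [BorelSpace Y]
    (m : Measure Y) (N : ℝ) (hN : 1 < N)
    (hBG : ∀ (y : Y) (r R : ℝ), 0 < r → r ≤ R →
      ENNReal.ofReal ((r / R) ^ N) * m (ball y R) ≤ m (ball y r))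
    (hposfin : ∀ (y : Y) (r : ℝ), 0 < r → 0 < m (ball y r) ∧ m (ball y r) < ⊤)
    (G : Type*) [Group G] [MulAction G Y]
    (hiso : ∀ g : G, Isometry (fun y : Y => g • y))
    (hsurj : ∀ g : G, Function.Surjective (fun y : Y => g • y))
    (hmp : ∀ (g : G) (A : Set Y), MeasurableSet A → m ((fun y : Y => g • y) '' A) = m A)
    (y₀ : Y) (ε : ℝ) (hε : 0 < ε)
    (hsep : ∀ g : G, g ≠ 1 → 2 * ε ≤ dist y₀ (g • y₀))
    (S : Finset G) (hSne : S.Nonempty) (hS1 : (1 : G) ∉ S)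
    (hgen : Subgroup.closure (S : Set G) = ⊤)
    (L : ℝ) (hL : IsGreatest ((fun g : G => dist y₀ (g • y₀)) '' S) L) :
    ∀ r : ℝ, 0 < r →
      (wordBall S r).Finite ∧
        (Nat.card (wordBall S r) : ℝ) ≤ ((r * L + ε) / ε) ^ N := by
  intro r hr
  -- basic facts about the displacement function
  have hdist : ∀ (g : G) (a b : Y), dist (g • a) (g • b) = dist a b := fun g a b =>
    (hiso g).dist_eq a b
  have hDtri : ∀ g h : G, dist y₀ ((g * h) • y₀) ≤ dist y₀ (g • y₀) + dist y₀ (h • y₀) := by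
    intro g h
    calc dist y₀ ((g * h) • y₀) ≤ dist y₀ (g • y₀) + dist (g • y₀) ((g * h) • y₀) :=
          dist_triangle _ _ _
      _ = dist y₀ (g • y₀) + dist y₀ (h • y₀) := by
          rw [mul_smul, hdist g y₀ (h • y₀)]
  have hDinv : ∀ g : G, dist y₀ (g⁻¹ • y₀) = dist y₀ (g • y₀) := by
    intro g
    rw [← hdist g y₀ (g⁻¹ • y₀), smul_inv_smul, dist_comm]
  have hDpow : ∀ (s : G) (n : ℕ), dist y₀ (s ^ n • y₀) ≤ n * dist y₀ (s • y₀) := by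
    intro s n
    induction n with
    | zero => simp
    | succ n ih =>
        have := hDtri (s ^ n) s
        rw [← pow_succ] at this
        push_cast
        calc dist y₀ (s ^ (n + 1) • y₀) ≤ dist y₀ (s ^ n • y₀) + dist y₀ (s • y₀) := this
          _ ≤ n * dist y₀ (s • y₀) + dist y₀ (s • y₀) := by linarith
          _ = (n + 1) * dist y₀ (s • y₀) := by ring
  have hDzpow : ∀ (s : G) (i : ℤ), dist y₀ (s ^ i • y₀) ≤ |(i : ℝ)| * dist y₀ (s • y₀) := by
    intro s i
    rcases Int.natAbs_eq i with h | h
    · rw [h, zpow_natCast]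
      have := hDpow s i.natAbs
      rwa [abs_of_nonneg (by positivity : (0:ℝ) ≤ ((i.natAbs : ℤ) : ℝ)), Int.cast_natCast]
    · rw [h, zpow_neg, zpow_natCast, hDinv]
      have := hDpow s i.natAbs
      simpa only [Int.cast_neg, Int.cast_natCast, abs_neg, Nat.abs_cast] using this
  have hDlist : ∀ l : List G,
      dist y₀ (l.prod • y₀) ≤ (l.map fun g => dist y₀ (g • y₀)).sum := by
    intro l
    induction l with
    | nil => simp
    | cons a t ih =>
        rw [List.prod_cons, List.map_cons, List.sum_cons]
        calc dist y₀ ((a * t.prod) • y₀) ≤ dist y₀ (a • y₀) + dist y₀ (t.prod • y₀) :=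
              hDtri a t.prod
          _ ≤ _ := by linarith
  -- L bounds
  have hLS : ∀ s ∈ S, dist y₀ (s • y₀) ≤ L := fun s hs => hL.2 ⟨s, hs, rfl⟩
  have hL0 : 0 < L := by
    obtain ⟨s, hs⟩ := hSne
    have h1 : s ≠ 1 := fun h => hS1 (h ▸ hs)
    have := hsep s h1
    have := hLS s hs
    linarith
  -- every element of the word ball displaces y₀ by at most r * L
  have hmove : ∀ g ∈ wordBall S r, dist y₀ (g • y₀) ≤ r * L := by
    rintro g ⟨k, α, i, hα, hsum, rfl⟩
    have h1 : dist y₀ ((List.ofFn fun j => α j ^ i j).prod • y₀) ≤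
        ∑ j, |(i j : ℝ)| * dist y₀ (α j • y₀) := by
      refine (hDlist _).trans ?_
      rw [List.map_ofFn, List.sum_ofFn]
      exact Finset.sum_le_sum fun j _ => hDzpow (α j) (i j)
    have h2 : ∑ j, |(i j : ℝ)| * dist y₀ (α j • y₀) ≤ ∑ j, |(i j : ℝ)| * L :=
      Finset.sum_le_sum fun j _ =>
        mul_le_mul_of_nonneg_left (hLS _ (hα j)) (abs_nonneg _)
    have h3 : ∑ j, |(i j : ℝ)| * L = (((∑ j, |i j| : ℤ)) : ℝ) * L := by
      push_cast
      rw [Finset.sum_mul]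
    have h4 : (((∑ j, |i j| : ℤ)) : ℝ) * L ≤ r * L :=
      mul_le_mul_of_nonneg_right hsum hL0.le
    calc dist y₀ ((List.ofFn fun j => α j ^ i j).prod • y₀)
        ≤ ∑ j, |(i j : ℝ)| * dist y₀ (α j • y₀) := h1
      _ ≤ ∑ j, |(i j : ℝ)| * L := h2
      _ = (((∑ j, |i j| : ℤ)) : ℝ) * L := h3
      _ ≤ r * L := h4
  -- separation of orbit points
  have hsep' : ∀ g h : G, g ≠ h → 2 * ε ≤ dist (g • y₀) (h • y₀) := by
    intro g h hgh
    have heq : dist (g • y₀) (h • y₀) = dist y₀ ((g⁻¹ * h) • y₀) := by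
      rw [mul_smul, ← hdist g⁻¹ (g • y₀) (h • y₀), inv_smul_smul]
    rw [heq]
    exact hsep _ fun hc => hgh (inv_mul_eq_one.mp hc)
  -- balls around orbit points have the same measure
  have hballim : ∀ g : G, (fun y : Y => g • y) '' ball y₀ ε = ball (g • y₀) ε := by
    intro g
    ext z
    constructor
    · rintro ⟨w, hw, rfl⟩
      simpa [mem_ball, hdist g] using hw
    · intro hz
      refine ⟨g⁻¹ • z, ?_, by simp⟩
      have : dist y₀ (g⁻¹ • z) = dist (g • y₀) z := by
        rw [← hdist g y₀ (g⁻¹ • z), smul_inv_smul]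
      simpa [mem_ball, dist_comm, this] using hz
  have hmeasball : ∀ g : G, m (ball (g • y₀) ε) = m (ball y₀ ε) := by
    intro g
    rw [← hballim g]
    exact hmp g _ measurableSet_ball
  set R : ℝ := r * L + ε with hRdef
  have hR0 : 0 < R := by positivity
  have hεR : ε ≤ R := by nlinarith
  set v := m (ball y₀ ε) with hv
  set M := m (ball y₀ R) with hM
  have hv0 : 0 < v := (hposfin y₀ ε hε).1
  have hM0 : M ≠ 0 := (hposfin y₀ R hR0).1.ne'
  have hMT : M ≠ ⊤ := (hposfin y₀ R hR0).2.ne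
  -- the counting estimate for finite subsets
  have counting : ∀ F : Finset G, ↑F ⊆ wordBall S r → (F.card : ℝ≥0∞) * v ≤ M := by
    intro F hF
    have hdisj : (↑F : Set G).PairwiseDisjoint fun g => ball (g • y₀) ε := by
      intro g _ h _ hgh
      exact ball_disjoint_ball (by linarith [hsep' g h hgh])
    have hsum : m (⋃ g ∈ F, ball (g • y₀) ε) = ∑ g ∈ F, m (ball (g • y₀) ε) :=
      measure_biUnion_finset hdisj fun g _ => measurableSet_ball
    have hsub : (⋃ g ∈ F, ball (g • y₀) ε) ⊆ ball y₀ R := by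
      intro z hz
      simp only [Set.mem_iUnion] at hz
      obtain ⟨g, hgF, hz⟩ := hz
      have h1 : dist y₀ (g • y₀) ≤ r * L := hmove g (hF hgF)
      have h2 : dist (g • y₀) z < ε := by rwa [mem_ball, dist_comm] at hz
      have := dist_triangle y₀ (g • y₀) z
      rw [mem_ball, dist_comm]
      calc dist y₀ z ≤ dist y₀ (g • y₀) + dist (g • y₀) z := this
        _ < r * L + ε := by linarith
    calc (F.card : ℝ≥0∞) * v = ∑ _g ∈ F, v := by rw [Finset.sum_const, nsmul_eq_mul]
      _ = ∑ g ∈ F, m (ball (g • y₀) ε) := by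
          exact (Finset.sum_congr rfl fun g _ => (hmeasball g).symm)
      _ = m (⋃ g ∈ F, ball (g • y₀) ε) := hsum.symm
      _ ≤ M := measure_mono hsub
  -- Bishop–Gromov gives a lower bound on v
  have hBG' : ENNReal.ofReal ((ε / R) ^ N) * M ≤ v := hBG y₀ ε R hε hεR
  have hpos : (0 : ℝ) < (ε / R) ^ N := Real.rpow_pos_of_pos (div_pos hε hR0) N
  have cardBound : ∀ F : Finset G, ↑F ⊆ wordBall S r → (F.card : ℝ) ≤ (R / ε) ^ N := by
    intro F hF
    have h1 : (F.card : ℝ≥0∞) * (ENNReal.ofReal ((ε / R) ^ N) * M) ≤ M :=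
      le_trans (mul_le_mul_right hBG' _) (counting F hF)
    have h2 : ((F.card : ℝ≥0∞) * ENNReal.ofReal ((ε / R) ^ N)) * M ≤ 1 * M := by
      rw [one_mul, mul_assoc]; exact h1
    have h3 : (F.card : ℝ≥0∞) * ENNReal.ofReal ((ε / R) ^ N) ≤ 1 :=
      (ENNReal.mul_le_mul_iff_left hM0 hMT).mp h2
    have h4 : (F.card : ℝ≥0∞) ≤ (ENNReal.ofReal ((ε / R) ^ N))⁻¹ := by
      rw [← ENNReal.le_inv_iff_mul_le] at h3
      exact h3
    have h5 : (ENNReal.ofReal ((ε / R) ^ N))⁻¹ = ENNReal.ofReal ((R / ε) ^ N) := by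
      rw [← ENNReal.ofReal_inv_of_pos hpos]
      congr 1
      rw [← Real.inv_rpow (div_pos hε hR0).le, inv_div]
    rw [h5, ← ENNReal.ofReal_natCast, ENNReal.ofReal_le_ofReal_iff
      (Real.rpow_nonneg (div_pos hR0 hε).le N)] at h4
    exact h4
  -- finiteness
  have hfin : (wordBall S r).Finite := by
    by_contra hinf
    obtain ⟨F, hFsub, hFcard⟩ :=
      Set.Infinite.exists_subset_card_eq hinf (⌊(R / ε) ^ N⌋₊ + 1)
    have h := cardBound F hFsub
    rw [hFcard] at h
    have := Nat.lt_floor_add_one ((R / ε) ^ N)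
    push_cast at h
    linarith
  refine ⟨hfin, ?_⟩
  have hcard : Nat.card (wordBall S r) = hfin.toFinset.card := by
    rw [Nat.card_coe_set_eq, Set.ncard_eq_toFinset_card _ hfin]
  rw [hcard]
  exact cardBound hfin.toFinset (by simp)
end

section
/- Let (Y,d) be a metric space carrying a Borel measure m satisfying the Bishop–Gromov inequality with K = 0 and parameter N ∈ (1,∞), with 0 < m(B(y,r)) < ∞ for every ball. Let G be a group acting on Y by measure-preserving surjective isometries, and let D ⊆ Y be a Borel set containing a point y₀ such that the translates g·D, g ∈ G, are pairwise disjoint for distinct elements of G and cover Y. If C := liminf_{r→∞} m(B(y₀,r) ∩ D)/r^N > 0, then G is finite and |G| ≤ m(B(y₀,1))/C. -/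
open Set Metric MeasureTheory ENNReal Filter

/-- Anderson-type theorem: in a space satisfying the Bishop–Gromov inequality with `K = 0`
and parameter `N`, if `G` acts by measure-preserving surjective isometries with a Borel
fundamental domain `D ∋ y₀`, and `C := liminf_{r→∞} m(B(y₀,r) ∩ D)/r^N > 0`, then `G` is
finite with `|G| ≤ m(B(y₀,1))/C`. -/
theorem stmt_4 {Y : Type*} [MetricSpace Y] [MeasurableSpace Y] [BorelSpace Y]
    (m : Measure Y) (N : ℝ) (hN : 1 < N)
    (hBG : ∀ (y : Y) (r R : ℝ), 0 < r → r ≤ R →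
      ENNReal.ofReal ((r / R) ^ N) * m (ball y R) ≤ m (ball y r))
    (hposfin : ∀ (y : Y) (r : ℝ), 0 < r → 0 < m (ball y r) ∧ m (ball y r) < ⊤)
    (G : Type*) [Group G] [MulAction G Y]
    (hiso : ∀ g : G, Isometry (fun y : Y => g • y))
    (hsurj : ∀ g : G, Function.Surjective (fun y : Y => g • y))
    (hmp : ∀ (g : G) (A : Set Y), MeasurableSet A → m ((fun y : Y => g • y) '' A) = m A)
    (D : Set Y) (hDmeas : MeasurableSet D) (y₀ : Y) (hy₀ : y₀ ∈ D)
    (hdisj : Pairwise fun g h : G =>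
      Disjoint ((fun y : Y => g • y) '' D) ((fun y : Y => h • y) '' D))
    (hcover : (⋃ g : G, (fun y : Y => g • y) '' D) = Set.univ)
    (C : ℝ≥0∞)
    (hC : C = Filter.liminf
      (fun r : ℝ => m (ball y₀ r ∩ D) / ENNReal.ofReal (r ^ N)) Filter.atTop)
    (hCpos : 0 < C) :
    Finite G ∧ (Nat.card G : ℝ≥0∞) ≤ m (ball y₀ 1) / C := by
  classical
  have hB1 := hposfin y₀ 1 one_pos
  have hmeasBD : MeasurableSet (ball y₀ 0 ∩ D) := measurableSet_ball.inter hDmeas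
  have himg : ∀ (g : G) (A : Set Y), MeasurableSet A →
      MeasurableSet ((fun y : Y => g • y) '' A) := by
    intro g A hA
    let e : Y ≃ᵢ Y := IsometryEquiv.mk' (fun y : Y => g • y)
      (Function.surjInv (hsurj g)) (fun x => Function.surjInv_eq (hsurj g) x) (hiso g)
    exact e.toHomeomorph.measurableEmbedding.measurableSet_image.2 hA
  have key : ∀ S : Finset G, (S.card : ℝ≥0∞) * C ≤ m (ball y₀ 1) := by
    intro S
    rcases S.eq_empty_or_nonempty with rfl | hSne
    · simp
    set L : ℝ := S.sup' hSne (fun g => dist (g • y₀) y₀) with hLdef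
    obtain ⟨g₀, hg₀⟩ := hSne
    have hL0 : 0 ≤ L := le_trans dist_nonneg (Finset.le_sup' (fun g => dist (g • y₀) y₀) hg₀)
    have step : ∀ r : ℝ, 1 ≤ r →
        (S.card : ℝ≥0∞) * (m (ball y₀ r ∩ D) / ENNReal.ofReal (r ^ N))
          ≤ m (ball y₀ 1) * ENNReal.ofReal (((r + L) / r) ^ N) := by
      intro r hr
      have hr0 : 0 < r := lt_of_lt_of_le one_pos hr
      have hrL : 0 < r + L := by linarith
      have hmeasI : MeasurableSet (ball y₀ r ∩ D) := measurableSet_ball.inter hDmeas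
      have hmeas : ∀ g ∈ S, MeasurableSet ((fun y : Y => g • y) '' (ball y₀ r ∩ D)) :=
        fun g _ => himg g _ hmeasI
      have hdj : (S : Set G).PairwiseDisjoint
          (fun g => (fun y : Y => g • y) '' (ball y₀ r ∩ D)) := by
        intro g _ h _ hgh
        exact (hdisj hgh).mono (Set.image_mono Set.inter_subset_right)
          (Set.image_mono Set.inter_subset_right)
      have hsum : ∑ g ∈ S, m ((fun y : Y => g • y) '' (ball y₀ r ∩ D))
          = m (⋃ g ∈ S, (fun y : Y => g • y) '' (ball y₀ r ∩ D)) :=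
        (measure_biUnion_finset hdj hmeas).symm
      have hsub : (⋃ g ∈ S, (fun y : Y => g • y) '' (ball y₀ r ∩ D)) ⊆ ball y₀ (r + L) := by
        intro y hy
        simp only [Set.mem_iUnion] at hy
        obtain ⟨g, hg, x, hx, rfl⟩ := hy
        have h1 : dist (g • x) (g • y₀) = dist x y₀ := (hiso g).dist_eq x y₀
        have h2 : dist (g • y₀) y₀ ≤ L := Finset.le_sup' (fun g => dist (g • y₀) y₀) hg
        have h3 : dist x y₀ < r := mem_ball.1 hx.1
        have : dist (g • x) y₀ ≤ dist (g • x) (g • y₀) + dist (g • y₀) y₀ := dist_triangle _ _ _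
        rw [mem_ball]
        rw [h1] at this
        calc dist (g • x) y₀ ≤ dist x y₀ + dist (g • y₀) y₀ := this
          _ < r + L := add_lt_add_of_lt_of_le h3 h2
      have hcardle : (S.card : ℝ≥0∞) * m (ball y₀ r ∩ D) ≤ m (ball y₀ (r + L)) := by
        calc (S.card : ℝ≥0∞) * m (ball y₀ r ∩ D)
            = ∑ g ∈ S, m ((fun y : Y => g • y) '' (ball y₀ r ∩ D)) := by
              rw [Finset.sum_congr rfl (fun g _ => hmp g _ hmeasI)]
              simp [Finset.sum_const, nsmul_eq_mul]
          _ = m (⋃ g ∈ S, (fun y : Y => g • y) '' (ball y₀ r ∩ D)) := hsum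
          _ ≤ m (ball y₀ (r + L)) := measure_mono hsub
      have hbg := hBG y₀ 1 (r + L) one_pos (by linarith)
      have h1 : ENNReal.ofReal ((r + L) ^ N) * ENNReal.ofReal ((1 / (r + L)) ^ N) = 1 := by
        rw [← ENNReal.ofReal_mul (by positivity),
          ← Real.mul_rpow (by positivity) (by positivity),
          mul_one_div_cancel (ne_of_gt hrL), Real.one_rpow, ENNReal.ofReal_one]
      have hRN : m (ball y₀ (r + L)) ≤ ENNReal.ofReal ((r + L) ^ N) * m (ball y₀ 1) := by
        calc m (ball y₀ (r + L))
            = ENNReal.ofReal ((r + L) ^ N) * ENNReal.ofReal ((1 / (r + L)) ^ N)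
              * m (ball y₀ (r + L)) := by rw [h1, one_mul]
          _ = ENNReal.ofReal ((r + L) ^ N)
              * (ENNReal.ofReal ((1 / (r + L)) ^ N) * m (ball y₀ (r + L))) := by ring
          _ ≤ ENNReal.ofReal ((r + L) ^ N) * m (ball y₀ 1) := mul_le_mul_right hbg _
      calc (S.card : ℝ≥0∞) * (m (ball y₀ r ∩ D) / ENNReal.ofReal (r ^ N))
          = (S.card : ℝ≥0∞) * m (ball y₀ r ∩ D) / ENNReal.ofReal (r ^ N) := by
            rw [mul_div_assoc]
        _ ≤ m (ball y₀ (r + L)) / ENNReal.ofReal (r ^ N) :=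
            ENNReal.div_le_div_right hcardle _
        _ ≤ ENNReal.ofReal ((r + L) ^ N) * m (ball y₀ 1) / ENNReal.ofReal (r ^ N) :=
            ENNReal.div_le_div_right hRN _
        _ = m (ball y₀ 1) * (ENNReal.ofReal ((r + L) ^ N) / ENNReal.ofReal (r ^ N)) := by
            rw [mul_comm, mul_div_assoc]
        _ = m (ball y₀ 1) * ENNReal.ofReal (((r + L) / r) ^ N) := by
            rw [← ENNReal.ofReal_div_of_pos (Real.rpow_pos_of_pos hr0 N),
              Real.div_rpow (by linarith) hr0.le]
    have hmulC : (S.card : ℝ≥0∞) * C =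
        Filter.liminf (fun r : ℝ =>
          (S.card : ℝ≥0∞) * (m (ball y₀ r ∩ D) / ENNReal.ofReal (r ^ N))) Filter.atTop := by
      rw [hC]
      exact Monotone.map_liminf_of_continuousAt
        (f := fun x : ℝ≥0∞ => (S.card : ℝ≥0∞) * x)
        (fun a b hab => mul_le_mul_right hab _) _
        ((ENNReal.continuous_const_mul (by simp)).continuousAt)
    have hlim : Filter.liminf
        (fun r : ℝ => m (ball y₀ 1) * ENNReal.ofReal (((r + L) / r) ^ N)) Filter.atTop
        = m (ball y₀ 1) := by
      have t1 : Filter.Tendsto (fun r : ℝ => (r + L) / r) Filter.atTop (nhds 1) := by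
        have h0 : Filter.Tendsto (fun r : ℝ => 1 + L / r) Filter.atTop (nhds 1) := by
          simpa using tendsto_const_nhds.add
            (Filter.Tendsto.div_atTop (tendsto_const_nhds (x := L)) Filter.tendsto_id)
        apply h0.congr'
        filter_upwards [Filter.eventually_gt_atTop (0 : ℝ)] with r hr
        field_simp
      have t2 : Filter.Tendsto (fun r : ℝ => ((r + L) / r) ^ N) Filter.atTop (nhds 1) := by
        have := (Real.continuousAt_rpow_const 1 N (Or.inl one_ne_zero)).tendsto.comp t1
        simpa [Function.comp_def] using this
      have t3 := (ENNReal.continuous_ofReal.tendsto 1).comp t2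
      have t4 : Filter.Tendsto
          (fun r : ℝ => m (ball y₀ 1) * ENNReal.ofReal (((r + L) / r) ^ N))
          Filter.atTop (nhds (m (ball y₀ 1))) := by
        have := ENNReal.Tendsto.const_mul (a := m (ball y₀ 1)) t3 (Or.inl (by simp))
        simpa using this
      exact t4.liminf_eq
    rw [hmulC, ← hlim]
    refine Filter.liminf_le_liminf ?_ ?_ ?_
    · filter_upwards [Filter.eventually_ge_atTop (1 : ℝ)] with r hr
      exact step r hr
    · isBoundedDefault
    · isBoundedDefault
  have hCle : C ≤ m (ball y₀ 1) := by simpa using key {1}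
  have hCtop : C ≠ ⊤ := ne_top_of_le_ne_top hB1.2.ne hCle
  have hfin : Finite G := by
    by_contra hinf
    rw [not_finite_iff_infinite] at hinf
    obtain ⟨n, hn⟩ := ENNReal.exists_nat_gt (ENNReal.div_lt_top hB1.2.ne hCpos.ne').ne
    obtain ⟨S, hS⟩ := Infinite.exists_subset_card_eq G n
    have h1 : m (ball y₀ 1) < (n : ℝ≥0∞) * C :=
      (ENNReal.div_lt_iff (Or.inl hCpos.ne') (Or.inl hCtop)).1 hn
    have h2 := key S
    rw [hS] at h2
    exact absurd h2 (not_le.2 h1)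
  refine ⟨hfin, ?_⟩
  have : Fintype G := Fintype.ofFinite G
  have h := key Finset.univ
  rw [Finset.card_univ, ← Nat.card_eq_fintype_card] at h
  exact (ENNReal.le_div_iff_mul_le (Or.inl hCpos.ne') (Or.inl hCtop)).2 h
end

section
/- Let (Y,d) be an unbounded proper geodesic metric space, let G be a group acting on Y by surjective isometries, and suppose there is a bounded subset B ⊆ Y with ⋃_{g∈G} g·B = Y (the action is cocompact). Then Y contains a line, i.e. there exists a map γ : ℝ → Y with d(γ(s),γ(t)) = |s−t| for all s,t ∈ ℝ. -/
open Set Metric Filter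

/-- An unbounded proper geodesic metric space admitting a cocompact action by surjective
isometries contains a line. -/
theorem stmt_6 {Y : Type*} [MetricSpace Y] [ProperSpace Y]
    (hunb : ¬ Bornology.IsBounded (Set.univ : Set Y))
    (hgeo : ∀ x y : Y, ∃ γ : ℝ → Y, γ 0 = x ∧ γ (dist x y) = y ∧
      ∀ s ∈ Set.Icc 0 (dist x y), ∀ t ∈ Set.Icc 0 (dist x y),
        dist (γ s) (γ t) = |s - t|)
    (G : Type*) [Group G] [MulAction G Y]
    (hiso : ∀ g : G, Isometry (fun y : Y => g • y))
    (hsurj : ∀ g : G, Function.Surjective (fun y : Y => g • y))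
    (B : Set Y) (hB : Bornology.IsBounded B)
    (hcover : (⋃ g : G, (fun y : Y => g • y) '' B) = Set.univ) :
    ∃ γ : ℝ → Y, ∀ s t : ℝ, dist (γ s) (γ t) = |s - t| := by
  classical
  -- Y is nonempty
  have hne : Nonempty Y := by
    by_contra h
    rw [not_nonempty_iff] at h
    exact hunb (by simp [Set.univ_eq_empty_iff.mpr h])
  obtain ⟨b⟩ := hne
  -- For each n, a segment of length 2n (parametrized on [-n,n]) with midpoint in B
  have key : ∀ n : ℕ, ∃ f : ℝ → Y, f 0 ∈ B ∧
      ∀ s ∈ Icc (-(n:ℝ)) n, ∀ t ∈ Icc (-(n:ℝ)) n, dist (f s) (f t) = |s - t| := by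
    intro n
    -- a point far from b
    have hfar : ∃ y : Y, 2 * (n : ℝ) < dist b y := by
      by_contra h
      push_neg at h
      refine hunb ((isBounded_closedBall (x := b) (r := 2 * n)).subset ?_)
      intro y _
      simpa [dist_comm, mem_closedBall] using h y
    obtain ⟨y, hy⟩ := hfar
    obtain ⟨γ, hγ0, hγL, hγd⟩ := hgeo b y
    set L := dist b y with hL
    have hL0 : 0 < L := lt_of_le_of_lt (by positivity) hy
    -- midpoint
    have hmid : γ (L / 2) ∈ ⋃ g : G, (fun y : Y => g • y) '' B := by
      rw [hcover]; exact mem_univ _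
    obtain ⟨g, b', hb'B, hgb'⟩ := by
      simpa [mem_iUnion, mem_image] using hmid
    refine ⟨fun t => g⁻¹ • γ (min L (max 0 (L / 2 + t))), ?_, ?_⟩
    · have h1 : min L (max 0 (L / 2 + 0)) = L / 2 := by
        rw [add_zero, max_eq_right (by linarith), min_eq_right (by linarith)]
      simp only [h1, ← hgb', inv_smul_smul]
      exact hb'B
    · intro s hs t ht
      have hn2 : (n : ℝ) < L / 2 := by linarith
      have hcl : ∀ u ∈ Icc (-(n:ℝ)) n, min L (max 0 (L / 2 + u)) = L / 2 + u := by
        intro u hu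
        rw [max_eq_right (by linarith [hu.1]), min_eq_right (by linarith [hu.2])]
      simp only [hcl s hs, hcl t ht]
      rw [(hiso g⁻¹).dist_eq,
        hγd (L / 2 + s) ⟨by linarith [hs.1], by linarith [hs.2]⟩
          (L / 2 + t) ⟨by linarith [ht.1], by linarith [ht.2]⟩]
      ring_nf
  choose f hfB hfd using key
  -- bound B
  obtain ⟨R, hR⟩ := hB.subset_closedBall b
  -- ultrafilter extending cofinite
  set F : Ultrafilter ℕ := Filter.hyperfilter ℕ with hF
  have hev : ∀ t : ℝ, ∀ᶠ n : ℕ in (F : Filter ℕ), |t| ≤ (n : ℝ) := by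
    intro t
    obtain ⟨m, hm⟩ := exists_nat_ge |t|
    have h1 : ∀ᶠ n : ℕ in Filter.cofinite, |t| ≤ (n : ℝ) := by
      rw [Nat.cofinite_eq_atTop]
      filter_upwards [Filter.eventually_ge_atTop m] with n hn
      exact hm.trans (by exact_mod_cast hn)
    exact h1.filter_mono (Filter.hyperfilter_le_cofinite)
  -- each evaluation eventually lies in a fixed compact ball
  have hlim : ∀ t : ℝ, ∃ y : Y, Tendsto (fun n => f n t) (F : Filter ℕ) (nhds y) := by
    intro t
    have hmem : ∀ᶠ n in (F : Filter ℕ), f n t ∈ closedBall b (R + |t|) := by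
      filter_upwards [hev t] with n hn
      have ht : t ∈ Icc (-(n:ℝ)) n := abs_le.mp hn
      have h0 : (0:ℝ) ∈ Icc (-(n:ℝ)) n := ⟨by simpa using (abs_nonneg t).trans hn, by
        exact_mod_cast (abs_nonneg t).trans hn⟩
      have hd : dist (f n t) (f n 0) = |t| := by simpa using hfd n t ht 0 h0
      have hb0 : f n 0 ∈ closedBall b R := hR (hfB n)
      calc dist (f n t) b ≤ dist (f n t) (f n 0) + dist (f n 0) b := dist_triangle _ _ _
        _ ≤ |t| + R := by rw [hd]; exact add_le_add_right (mem_closedBall.mp hb0) _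
        _ = R + |t| := by ring
    obtain ⟨y, -, hy⟩ := (isCompact_closedBall b (R + |t|)).ultrafilter_le_nhds
      (F.map (fun n => f n t)) (by rwa [Ultrafilter.coe_map, le_principal_iff, mem_map])
    exact ⟨y, by rwa [Ultrafilter.coe_map] at hy⟩
  choose γ hγ using hlim
  refine ⟨γ, fun s t => ?_⟩
  have h1 : Tendsto (fun n => dist (f n s) (f n t)) (F : Filter ℕ)
      (nhds (dist (γ s) (γ t))) := (hγ s).dist (hγ t)
  have h2 : ∀ᶠ n in (F : Filter ℕ), dist (f n s) (f n t) = |s - t| := by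
    filter_upwards [hev s, hev t] with n hns hnt
    exact hfd n s (abs_le.mp hns) t (abs_le.mp hnt)
  exact tendsto_nhds_unique h1
    (Filter.Tendsto.congr' (Filter.EventuallyEq.symm h2) tendsto_const_nhds)
end

section
/- Let (X,d) be an unbounded proper length space with basepoint x₀, and let p : X̃ → X be a regular covering map which is a local isometry between length spaces, where X̃ is connected, locally path-connected and proper, and the deck transformations act by isometries of X̃. Fix x̃₀ ∈ p⁻¹(x₀), a nontrivial deck transformation g, and say that a loop c based at x₀ represents g if the lift of c starting at x̃₀ ends at g·x̃₀. Suppose there is a compact set K ⊆ X such that no loop of the form σ ∘ γ ∘ σ⁻¹ represents g, where γ is a loop contained in X∖K and σ is a path from x₀ to γ(0) (i.e. X fails the loops-to-infinity property for g). Then X̃ contains a line, i.e. there exists a map c : ℝ → X̃ with d_{X̃}(c(s),c(t)) = |s−t| for all s,t ∈ ℝ. -/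
open Set Metric
open Filter Topology

lemma eVar_le_of_edist_le {α : Type*} [LinearOrder α] {E F : Type*} [PseudoEMetricSpace E]
    [PseudoEMetricSpace F] (f : α → E) (g : α → F) (s : Set α)
    (h : ∀ x ∈ s, ∀ y ∈ s, edist (f x) (f y) ≤ edist (g x) (g y)) :
    eVariationOn f s ≤ eVariationOn g s := by
  refine iSup_le fun q => ?_
  refine le_trans (Finset.sum_le_sum fun i _ => h _ (q.2.2.2 _) _ (q.2.2.2 _)) ?_
  exact le_iSup (fun (q : ℕ × {u : ℕ → α // Monotone u ∧ ∀ i, u i ∈ s}) =>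
    ∑ i ∈ Finset.range q.1, edist (g (q.2.1 (i+1))) (g (q.2.1 i))) q

lemma eVar_eq_of_edist_eq {α : Type*} [LinearOrder α] {E F : Type*} [PseudoEMetricSpace E]
    [PseudoEMetricSpace F] (f : α → E) (g : α → F) (s : Set α)
    (h : ∀ x ∈ s, ∀ y ∈ s, edist (f x) (f y) = edist (g x) (g y)) :
    eVariationOn f s = eVariationOn g s :=
  le_antisymm (eVar_le_of_edist_le f g s fun x hx y hy => (h x hx y hy).le)
    (eVar_le_of_edist_le g f s fun x hx y hy => (h x hx y hy).ge)

lemma eVar_comp_localIsometry {Y X : Type*} [MetricSpace Y] [MetricSpace X] {p : Y → X}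
    (hloc : IsLocalIsometry p) {γ : ℝ → Y} (hγ : ContinuousOn γ (Icc 0 1)) :
    eVariationOn (fun t => p (γ t)) (Icc 0 1) = eVariationOn γ (Icc 0 1) := by
  choose r hr hiso using hloc
  have hC : IsCompact (γ '' (Icc 0 1)) := isCompact_Icc.image_of_continuousOn hγ
  obtain ⟨δ, hδ, hleb⟩ :=
    lebesgue_number_lemma_of_metric (ι := ↥(γ '' (Icc 0 1))) hC
      (fun z => isOpen_ball (x := z.1) (ε := r z.1 / 2))
      (fun y hy => mem_iUnion.2 ⟨⟨y, hy⟩, mem_ball_self (half_pos (hr _))⟩)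
  have huc := isCompact_Icc.uniformContinuousOn_of_continuous hγ
  rw [Metric.uniformContinuousOn_iff] at huc
  obtain ⟨η, hη, huc⟩ := huc δ hδ
  have small : ∀ u v : ℝ, u ∈ Icc (0:ℝ) 1 → v ∈ Icc (0:ℝ) 1 → u ≤ v → v - u < η →
      eVariationOn (fun t => p (γ t)) (Icc 0 1 ∩ Icc u v)
        = eVariationOn γ (Icc 0 1 ∩ Icc u v) := by
    intro u v hu hv huv hlen
    obtain ⟨i, hi⟩ := hleb (γ u) (mem_image_of_mem γ hu)
    have hball : ∀ x ∈ Icc 0 1 ∩ Icc u v, γ x ∈ ball i.1 (r i.1) := by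
      intro x hx
      have hd : dist x u < η := by
        rw [Real.dist_eq, abs_of_nonneg (by linarith [hx.2.1])]
        linarith [hx.2.2]
      have := huc x hx.1 u hu hd
      exact ball_subset_ball (half_le_self (hr _).le) (hi this)
    apply eVar_eq_of_edist_eq
    intro x hx y hy
    rw [edist_dist, edist_dist, hiso i.1 _ (hball x hx) _ (hball y hy)]
  obtain ⟨m, hm⟩ := exists_nat_one_div_lt hη
  have hM : (0:ℝ) < (m+1 : ℕ) := by positivity
  have key : ∀ k : ℕ, k ≤ m + 1 →
      eVariationOn (fun t => p (γ t)) (Icc 0 1 ∩ Icc 0 ((k : ℝ)/(m+1:ℕ)))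
        = eVariationOn γ (Icc 0 1 ∩ Icc 0 ((k : ℝ)/(m+1:ℕ))) := by
    intro k
    induction k with
    | zero =>
      intro _
      simp only [Nat.cast_zero, zero_div]
      exact small 0 0 (by norm_num) (by norm_num) le_rfl (by simpa using hη)
    | succ k ih =>
      intro hk
      have hk' : (k:ℝ) ≤ m + 1 := by exact_mod_cast Nat.le_of_succ_le hk
      have hkk : ((k:ℝ)+1) ≤ m + 1 := by exact_mod_cast hk
      have h0k : (0:ℝ) ≤ (k:ℝ)/(m+1:ℕ) := by positivity
      have hk1 : (k:ℝ)/(m+1:ℕ) ≤ ((k+1:ℕ):ℝ)/(m+1:ℕ) :=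
        (div_le_div_iff_of_pos_right hM).2 (by push_cast; linarith)
      have hmemk : (k:ℝ)/(m+1:ℕ) ∈ Icc (0:ℝ) 1 :=
        ⟨h0k, (div_le_one hM).2 (by push_cast; linarith)⟩
      have hmemk1 : ((k+1:ℕ):ℝ)/(m+1:ℕ) ∈ Icc (0:ℝ) 1 :=
        ⟨by positivity, (div_le_one hM).2 (by push_cast; linarith)⟩
      have hdiff : ((k+1:ℕ):ℝ)/(m+1:ℕ) - (k:ℝ)/(m+1:ℕ) < η := by
        rw [div_sub_div_same]
        push_cast
        rw [add_sub_cancel_left]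
        exact hm
      rw [← eVariationOn.Icc_add_Icc (fun t => p (γ t)) h0k hk1 hmemk,
        ← eVariationOn.Icc_add_Icc γ h0k hk1 hmemk,
        ih (Nat.le_of_succ_le hk), small _ _ hmemk hmemk1 hk1 hdiff]
  have := key (m+1) le_rfl
  have hone : ((m+1:ℕ):ℝ)/(m+1:ℕ) = 1 := div_self (ne_of_gt hM)
  rw [hone] at this
  simpa [inter_self] using this

lemma markers {Y : Type*} [MetricSpace Y] {c : ℝ → Y} (hc : ContinuousOn c (Icc 0 1))
    (hfin : eVariationOn c (Icc 0 1) ≠ ⊤) {ε : ℝ} (hε : 0 ≤ ε)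
    (hV : (eVariationOn c (Icc 0 1)).toReal ≤ dist (c 0) (c 1) + ε)
    {t₀ : ℝ} (ht₀ : t₀ ∈ Icc (0:ℝ) 1) :
    ∃ q : ℝ → Y, q 0 = c t₀ ∧
      ∀ s t : ℝ, -(dist (c 0) (c t₀)) ≤ s → s ≤ t → t ≤ dist (c t₀) (c 1) →
        |dist (q s) (q t) - (t - s)| ≤ ε := by
  set A := dist (c 0) (c t₀) with hA
  set B := dist (c t₀) (c 1) with hB
  have hbv : LocallyBoundedVariationOn c (Icc 0 1) := fun a b _ _ =>
    ((eVariationOn.mono c inter_subset_left).trans_lt (lt_top_iff_ne_top.2 hfin)).ne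
  set v := variationOnFromTo c (Icc 0 1) with hv
  have dle : ∀ a b : ℝ, a ∈ Icc (0:ℝ) 1 → b ∈ Icc (0:ℝ) 1 → a ≤ b →
      dist (c a) (c b) ≤ v a b := by
    intro a b ha hb hab
    rw [hv, variationOnFromTo.eq_of_le c _ hab]
    exact BoundedVariationOn.dist_le
      ((eVariationOn.mono c inter_subset_left).trans_lt (lt_top_iff_ne_top.2 hfin)).ne
      ⟨ha, le_rfl, hab⟩ ⟨hb, hab, le_rfl⟩
  have vadd : ∀ a b d : ℝ, a ∈ Icc (0:ℝ) 1 → b ∈ Icc (0:ℝ) 1 → d ∈ Icc (0:ℝ) 1 →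
      v a b + v b d = v a d := fun a b d ha hb hd => variationOnFromTo.add hbv ha hb hd
  have hV01 : v 0 1 = (eVariationOn c (Icc 0 1)).toReal := by
    rw [hv, variationOnFromTo.eq_of_le c _ zero_le_one, inter_self]
  have h01 : (0:ℝ) ∈ Icc (0:ℝ) 1 := ⟨le_rfl, zero_le_one⟩
  have h11 : (1:ℝ) ∈ Icc (0:ℝ) 1 := ⟨zero_le_one, le_rfl⟩
  have hA0 : 0 ≤ A := dist_nonneg
  have hB0 : 0 ≤ B := dist_nonneg
  have hvsplit : v 0 t₀ + v t₀ 1 = v 0 1 := vadd 0 t₀ 1 h01 ht₀ h11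
  have hv0t₀ : A ≤ v 0 t₀ := dle 0 t₀ h01 ht₀ ht₀.1
  have hvt₀1 : B ≤ v t₀ 1 := dle t₀ 1 ht₀ h11 ht₀.2
  have hVle : v 0 1 ≤ A + B + ε := by
    rw [hV01]
    calc (eVariationOn c (Icc 0 1)).toReal ≤ dist (c 0) (c 1) + ε := hV
    _ ≤ A + B + ε := by have := dist_triangle (c 0) (c t₀) (c 1); linarith
  have hVge : v 0 1 - ε ≤ dist (c 0) (c 1) := by rw [hV01]; linarith
  -- IVT selections
  have hfwd : ∀ s ∈ Icc (0:ℝ) B, ∃ τ ∈ Icc t₀ 1, dist (c t₀) (c τ) = s := by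
    intro s hs
    have hcont : ContinuousOn (fun τ => dist (c t₀) (c τ)) (Icc t₀ 1) :=
      (continuous_const.dist continuous_id).comp_continuousOn
        (hc.mono (Icc_subset_Icc ht₀.1 le_rfl))
    have := intermediate_value_Icc ht₀.2 hcont
    have hmem : s ∈ Icc (dist (c t₀) (c t₀)) (dist (c t₀) (c 1)) := by
      rw [dist_self]; exact hs
    obtain ⟨τ, hτ, hfτ⟩ := this hmem
    exact ⟨τ, hτ, hfτ⟩
  have hbwd : ∀ s ∈ Icc (0:ℝ) A, ∃ τ ∈ Icc 0 t₀, dist (c t₀) (c τ) = s := by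
    intro s hs
    have hcont : ContinuousOn (fun τ => dist (c t₀) (c τ)) (Icc 0 t₀) :=
      (continuous_const.dist continuous_id).comp_continuousOn
        (hc.mono (Icc_subset_Icc le_rfl ht₀.2))
    have := intermediate_value_Icc' ht₀.1 hcont
    have hmem : s ∈ Icc (dist (c t₀) (c t₀)) (dist (c t₀) (c 0)) := by
      rw [dist_self, dist_comm]; exact hs
    obtain ⟨τ, hτ, hfτ⟩ := this hmem
    exact ⟨τ, hτ, hfτ⟩
  have hex : ∀ s : ℝ, ∃ τ, τ ∈ Icc (0:ℝ) 1 ∧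
      ((0 ≤ s ∧ s ≤ B) → τ ∈ Icc t₀ 1 ∧ dist (c t₀) (c τ) = s) ∧
      ((-A ≤ s ∧ s < 0) → τ ∈ Icc 0 t₀ ∧ dist (c t₀) (c τ) = -s) := by
    intro s
    by_cases h1 : 0 ≤ s ∧ s ≤ B
    · obtain ⟨τ, hτ, hfτ⟩ := hfwd s ⟨h1.1, h1.2⟩
      exact ⟨τ, ⟨ht₀.1.trans hτ.1, hτ.2⟩, fun _ => ⟨hτ, hfτ⟩,
        fun h2 => absurd h1.1 (not_le.2 h2.2)⟩
    · by_cases h2 : -A ≤ s ∧ s < 0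
      · obtain ⟨τ, hτ, hfτ⟩ := hbwd (-s) ⟨by linarith [h2.2], by linarith [h2.1]⟩
        exact ⟨τ, ⟨hτ.1, hτ.2.trans ht₀.2⟩, fun h1' => absurd h1' h1, fun _ => ⟨hτ, hfτ⟩⟩
      · exact ⟨t₀, ht₀, fun h1' => absurd h1' h1, fun h2' => absurd h2' h2⟩
  choose T hT1 hTf hTb using hex
  refine ⟨fun s => c (T s), ?_, ?_⟩
  · obtain ⟨_, hf0⟩ := hTf 0 ⟨le_rfl, hB0⟩
    exact (dist_eq_zero.1 hf0).symm
  · intro s t hsA hst htB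
    rcases le_or_gt 0 s with hs | hs
    · -- 0 ≤ s ≤ t ≤ B
      obtain ⟨hτs, hfs⟩ := hTf s ⟨hs, hst.trans htB⟩
      obtain ⟨hτt, hft⟩ := hTf t ⟨hs.trans hst, htB⟩
      have hTs1 := hT1 s; have hTt1 := hT1 t
      have hlow : t - s ≤ dist (c (T s)) (c (T t)) := by
        have h3 := dist_triangle (c t₀) (c (T s)) (c (T t))
        rw [hfs, hft] at h3; linarith
      have hup : dist (c (T s)) (c (T t)) ≤ t - s + ε := by
        rcases le_total (T s) (T t) with hTT | hTT
        · have e1 : v t₀ (T s) + v (T s) (T t) = v t₀ (T t) := vadd _ _ _ ht₀ hTs1 hTt1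
          have e2 : v t₀ (T t) + v (T t) 1 = v t₀ 1 := vadd _ _ _ ht₀ hTt1 h11
          have b1 : s ≤ v t₀ (T s) := by
            have h5 := dle t₀ (T s) ht₀ hTs1 hτs.1; rw [hfs] at h5; exact h5
          have b2 : B - t ≤ v (T t) 1 := by
            have h4 := dist_triangle (c t₀) (c (T t)) (c 1)
            have h5 := dle (T t) 1 hTt1 h11 hTt1.2
            rw [hft] at h4; linarith
          have b3 := dle (T s) (T t) hTs1 hTt1 hTT
          linarith
        · have e1 : v t₀ (T t) + v (T t) (T s) = v t₀ (T s) := vadd _ _ _ ht₀ hTt1 hTs1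
          have e2 : v t₀ (T s) + v (T s) 1 = v t₀ 1 := vadd _ _ _ ht₀ hTs1 h11
          have b1 : t ≤ v t₀ (T t) := by
            have h5 := dle t₀ (T t) ht₀ hTt1 hτt.1; rw [hft] at h5; exact h5
          have b2 : B - s ≤ v (T s) 1 := by
            have h4 := dist_triangle (c t₀) (c (T s)) (c 1)
            have h5 := dle (T s) 1 hTs1 h11 hTs1.2
            rw [hfs] at h4; linarith
          have b3 := dle (T t) (T s) hTt1 hTs1 hTT
          rw [dist_comm] at b3
          linarith
      rw [abs_le]; constructor <;> linarith
    · rcases lt_or_ge t 0 with ht | ht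
      · -- s ≤ t < 0
        obtain ⟨hτs, hfs⟩ := hTb s ⟨hsA, hst.trans_lt ht⟩
        obtain ⟨hτt, hft⟩ := hTb t ⟨le_trans hsA hst, ht⟩
        have hTs1 := hT1 s; have hTt1 := hT1 t
        have hlow : t - s ≤ dist (c (T s)) (c (T t)) := by
          have h3 := dist_triangle (c t₀) (c (T t)) (c (T s))
          rw [hfs, hft, dist_comm (c (T t)) (c (T s))] at h3; linarith
        have hv0t₀up : v 0 t₀ ≤ A + ε := by linarith
        have hup : dist (c (T s)) (c (T t)) ≤ t - s + ε := by
          rcases le_total (T s) (T t) with hTT | hTT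
          · have e1 : v 0 (T s) + v (T s) (T t) = v 0 (T t) := vadd _ _ _ h01 hTs1 hTt1
            have e2 : v 0 (T t) + v (T t) t₀ = v 0 t₀ := vadd _ _ _ h01 hTt1 ht₀
            have b1 : A + s ≤ v 0 (T s) := by
              have h4 := dist_triangle (c 0) (c (T s)) (c t₀)
              have h5 := dle 0 (T s) h01 hTs1 hTs1.1
              rw [dist_comm (c (T s)) (c t₀), hfs] at h4; linarith
            have b2 : -t ≤ v (T t) t₀ := by
              have h5 := dle (T t) t₀ hTt1 ht₀ hτt.2
              rw [dist_comm] at h5; rw [← hft]; linarith [hft]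
            have b3 := dle (T s) (T t) hTs1 hTt1 hTT
            linarith
          · have e1 : v 0 (T t) + v (T t) (T s) = v 0 (T s) := vadd _ _ _ h01 hTt1 hTs1
            have e2 : v 0 (T s) + v (T s) t₀ = v 0 t₀ := vadd _ _ _ h01 hTs1 ht₀
            have b1 : A + t ≤ v 0 (T t) := by
              have h4 := dist_triangle (c 0) (c (T t)) (c t₀)
              have h5 := dle 0 (T t) h01 hTt1 hTt1.1
              rw [dist_comm (c (T t)) (c t₀), hft] at h4; linarith
            have b2 : -s ≤ v (T s) t₀ := by
              have h5 := dle (T s) t₀ hTs1 ht₀ hτs.2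
              rw [dist_comm] at h5; linarith [hfs]
            have b3 := dle (T t) (T s) hTt1 hTs1 hTT
            rw [dist_comm] at b3
            linarith
        rw [abs_le]; constructor <;> linarith
      · -- s < 0 ≤ t
        obtain ⟨hτs, hfs⟩ := hTb s ⟨hsA, hs⟩
        obtain ⟨hτt, hft⟩ := hTf t ⟨ht, htB⟩
        have hTs1 := hT1 s; have hTt1 := hT1 t
        have hup : dist (c (T s)) (c (T t)) ≤ t - s + ε := by
          have h3 := dist_triangle (c (T s)) (c t₀) (c (T t))
          rw [dist_comm (c (T s)) (c t₀), hfs, hft] at h3; linarith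
        have hlow : t - s - ε ≤ dist (c (T s)) (c (T t)) := by
          have e1 : v 0 (T s) + v (T s) t₀ = v 0 t₀ := vadd _ _ _ h01 hTs1 ht₀
          have e2 : v t₀ (T t) + v (T t) 1 = v t₀ 1 := vadd _ _ _ ht₀ hTt1 h11
          have b1 : -s ≤ v (T s) t₀ := by
            have h5 := dle (T s) t₀ hTs1 ht₀ hτs.2
            rw [dist_comm] at h5; linarith [hfs]
          have b2 : t ≤ v t₀ (T t) := by
            have h5 := dle t₀ (T t) ht₀ hTt1 hτt.1; rw [hft] at h5; exact h5
          have b3 : dist (c 0) (c (T s)) ≤ v 0 (T s) := dle 0 (T s) h01 hTs1 hTs1.1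
          have b4 : dist (c (T t)) (c 1) ≤ v (T t) 1 := dle (T t) 1 hTt1 h11 hTt1.2
          have h6 := dist_triangle (c 0) (c (T s)) (c 1)
          have h7 := dist_triangle (c (T s)) (c (T t)) (c 1)
          linarith
        rw [abs_le]; constructor <;> linarith

/-- Sormani-type theorem: if an unbounded proper length space `X` fails the
loops-to-infinity property for a nontrivial deck transformation `g` of a regular covering
`p : Xt → X` which is a local isometry (witnessed by a compact `K ⊆ X` such that no loop
`σ ∘ γ ∘ σ⁻¹` with `γ` a loop in `X∖K` and `σ` a path from `x₀` to `γ(0)` represents `g`),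
then the cover `Xt` contains a line. -/
theorem stmt_9 {X Xt : Type*} [MetricSpace X] [MetricSpace Xt]
    [ProperSpace X] [ProperSpace Xt] [ConnectedSpace Xt] [LocallyPathConnectedSpace Xt]
    (hX : IsLengthSpace X) (hXt : IsLengthSpace Xt)
    (hunb : ¬ Bornology.IsBounded (Set.univ : Set X))
    (x₀ : X)
    (p : Xt → X) (hp : IsCoveringMap p) (hloc : IsLocalIsometry p)
    (G : Type*) [Group G] [MulAction G Xt]
    (hiso : ∀ g : G, Isometry (fun y : Xt => g • y))
    (hdeck : ∀ (g : G) (y : Xt), p (g • y) = p y)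
    (hreg : ∀ y₁ y₂ : Xt, p y₁ = p y₂ → ∃ g : G, g • y₁ = y₂)
    (xt₀ : Xt) (hxt₀ : p xt₀ = x₀)
    (g : G) (hg : g • xt₀ ≠ xt₀)
    (K : Set X) (hKcpt : IsCompact K)
    (hfail : ∀ σ γ : ℝ → X,
      ContinuousOn σ (Set.Icc 0 1) → σ 0 = x₀ →
      ContinuousOn γ (Set.Icc 0 1) → γ 0 = σ 1 → γ 1 = σ 1 →
      (∀ t ∈ Set.Icc (0:ℝ) 1, γ t ∉ K) →
      ¬ ∃ ct : ℝ → Xt, ContinuousOn ct (Set.Icc 0 1) ∧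
          (∀ t ∈ Set.Icc (0:ℝ) 1, p (ct t) =
            (if t ≤ 1/3 then σ (3 * t) else if t ≤ 2/3 then γ (3 * t - 1)
              else σ (3 - 3 * t))) ∧
          ct 0 = xt₀ ∧ ct 1 = g • xt₀) :
    ∃ c : ℝ → Xt, ∀ s t : ℝ, dist (c s) (c t) = |s - t| := by
  classical
  -- p is 1-Lipschitz
  have lip : ∀ a b : Xt, dist (p a) (p b) ≤ dist a b := by
    have elip : ∀ a b : Xt, edist (p a) (p b) ≤ edist a b := by
      intro a b
      rw [hX (p a) (p b), hXt a b]
      refine le_iInf fun γ => ?_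
      refine iInf_le_of_le ⟨fun t => p (γ.1 t), hp.continuous.comp_continuousOn γ.2.1,
        by simp only []; rw [γ.2.2.1], by simp only []; rw [γ.2.2.2]⟩ ?_
      exact le_of_eq (eVar_comp_localIsometry hloc γ.2.1)
    intro a b
    have h := elip a b
    rw [edist_dist, edist_dist] at h
    exact (ENNReal.ofReal_le_ofReal_iff dist_nonneg).1 h
  -- X is path connected
  haveI hXpc : PathConnectedSpace X := by
    refine ⟨⟨x₀⟩, fun x y => ?_⟩
    have h := hX x y
    have hne : Nonempty {γ : ℝ → X // ContinuousOn γ (Set.Icc 0 1) ∧ γ 0 = x ∧ γ 1 = y} := by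
      by_contra hempty
      rw [not_nonempty_iff] at hempty
      rw [iInf_of_empty] at h
      exact edist_ne_top x y h
    obtain ⟨γ, hγc, h0, h1⟩ := hne
    exact ⟨⟨⟨fun t => γ t.1, hγc.restrict⟩, by simp [h0], by simp [h1]⟩⟩
  -- p is surjective
  have psurj : Function.Surjective p := by
    have hclopen : IsClopen (range p) := by
      constructor
      · rw [← isOpen_compl_iff]
        refine isOpen_iff_forall_mem_open.2 fun x hx => ?_
        obtain ⟨_, U, hxU, hU, -, H, -⟩ := hp x
        refine ⟨U, fun z hz hzr => ?_, hU, hxU⟩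
        obtain ⟨e, he⟩ := hzr
        have he' : p e ∈ U := by rw [he]; exact hz
        exact hx ⟨(H ⟨e, he'⟩).2.1, (H ⟨e, he'⟩).2.2⟩
      · exact hp.isOpenMap.isOpen_range
    have hrange : range p = univ := hclopen.eq_univ ⟨p xt₀, mem_range_self xt₀⟩
    exact Set.range_eq_univ.1 hrange
  haveI hXtpc : PathConnectedSpace Xt := pathConnectedSpace_iff_connectedSpace.2 inferInstance
  -- the loops-to-infinity failure: every path from y to g • y projects into K
  have star : ∀ (y : Xt) (ct : ℝ → Xt), ContinuousOn ct (Icc 0 1) → ct 0 = y → ct 1 = g • y →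
      ∃ τ ∈ Icc (0:ℝ) 1, p (ct τ) ∈ K := by
    intro y ct hct h0 h1
    by_contra hcon
    push_neg at hcon
    set σp : Path xt₀ y := PathConnectedSpace.somePath xt₀ y with hσp
    set E : ℝ → Xt := fun t => σp.extend t with hE
    have hEcont : Continuous E := σp.continuous_extend
    have hE0 : E 0 = xt₀ := σp.extend_zero
    have hE1 : E 1 = y := σp.extend_one
    set cl : ℝ → ℝ := fun t => max 0 (min 1 t) with hcl
    have hclcont : Continuous cl :=
      continuous_const.max (continuous_const.min continuous_id)
    have hclmem : ∀ t, cl t ∈ Icc (0:ℝ) 1 :=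
      fun t => ⟨le_max_left _ _, max_le zero_le_one (min_le_left _ _)⟩
    set c' : ℝ → Xt := fun t => ct (cl t) with hc'
    have hc'cont : Continuous c' := hct.comp_continuous hclcont hclmem
    have hcl0 : cl 0 = 0 := by simp [hcl]
    have hcl1 : cl 1 = 1 := by simp [hcl]
    have hc'0 : c' 0 = y := by rw [hc']; simp only [hcl0]; exact h0
    have hc'1 : c' 1 = g • y := by rw [hc']; simp only [hcl1]; exact h1
    set σf : ℝ → X := fun t => p (E t) with hσf
    set γf : ℝ → X := fun t => p (c' t) with hγf
    set ctt : ℝ → Xt := fun t =>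
      if t ≤ 1/3 then E (3*t) else if t ≤ 2/3 then c' (3*t - 1) else g • E (3 - 3*t) with hctt
    have hcttcont : Continuous ctt := by
      rw [hctt]
      refine Continuous.if_le ?_ ?_ continuous_id continuous_const ?_
      · exact hEcont.comp (continuous_const.mul continuous_id)
      · refine Continuous.if_le ?_ ?_ continuous_id continuous_const ?_
        · exact hc'cont.comp ((continuous_const.mul continuous_id).sub continuous_const)
        · exact (hiso g).continuous.comp (hEcont.comp (continuous_const.sub (continuous_const.mul continuous_id)))
        · intro x hx
          rw [hx]
          norm_num
          rw [hc'1, hE1]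
      · intro x hx
        rw [hx, if_pos (by norm_num : (1:ℝ)/3 ≤ 2/3)]
        norm_num
        rw [hE1, hc'0]
    refine hfail σf γf (hp.continuous.comp hEcont).continuousOn ?_
      (hp.continuous.comp hc'cont).continuousOn ?_ ?_ ?_
      ⟨ctt, hcttcont.continuousOn, ?_, ?_, ?_⟩
    · rw [hσf]; simp only []; rw [hE0, hxt₀]
    · rw [hσf, hγf]; simp only []; rw [hc'0, hE1]
    · rw [hσf, hγf]; simp only []; rw [hc'1, hE1, hdeck]
    · intro τ _
      rw [hγf]; simp only []
      exact hcon (cl τ) (hclmem τ)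
    · intro τ _
      rw [hctt]; simp only []
      split_ifs with hh1 hh2
      · rfl
      · rfl
      · exact hdeck g _
    · rw [hctt]; simp only []
      rw [if_pos (by norm_num : (0:ℝ) ≤ 1/3)]
      norm_num
      exact hE0
    · rw [hctt]; simp only []
      rw [if_neg (by norm_num : ¬ (1:ℝ) ≤ 1/3), if_neg (by norm_num : ¬ (1:ℝ) ≤ 2/3)]
      norm_num
      rw [hE0]
  -- far points
  obtain ⟨R, hR⟩ := hKcpt.isBounded.subset_closedBall x₀
  have hfar : ∀ n : ℕ, ∃ x : X, ∀ k ∈ K, (n:ℝ) + 1 ≤ dist x k := by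
    intro n
    have hns : ¬ (univ : Set X) ⊆ closedBall x₀ (R + n + 1) := fun h =>
      hunb ((isBounded_closedBall).subset h)
    obtain ⟨x, -, hx⟩ := not_subset.1 hns
    rw [mem_closedBall, not_le] at hx
    refine ⟨x, fun k hk => ?_⟩
    have hk' : dist k x₀ ≤ R := hR hk
    have := dist_triangle x k x₀
    linarith
  -- main per-n construction
  have main : ∀ n : ℕ, ∃ (kp : Xt) (q : ℝ → Xt), p kp ∈ K ∧ q 0 = kp ∧
      ∀ s t : ℝ, -((n:ℝ)+1) ≤ s → s ≤ t → t ≤ (n:ℝ)+1 →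
        |dist (q s) (q t) - (t - s)| ≤ 1/((n:ℝ)+1) := by
    intro n
    obtain ⟨x, hx⟩ := hfar n
    obtain ⟨y, hy⟩ := psurj x
    set ε : ℝ := 1/((n:ℝ)+1) with hεdef
    have hεpos : 0 < ε := by positivity
    have hlt : ⨅ γ : {γ : ℝ → Xt // ContinuousOn γ (Set.Icc 0 1) ∧ γ 0 = y ∧ γ 1 = g • y},
        pathLength γ.1 < edist y (g • y) + ENNReal.ofReal ε := by
      rw [← hXt y (g • y)]
      exact ENNReal.lt_add_right (edist_ne_top _ _) (ENNReal.ofReal_pos.2 hεpos).ne'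
    obtain ⟨⟨c, hcont, h0, h1⟩, hclen⟩ := iInf_lt_iff.1 hlt
    have htop : edist y (g • y) + ENNReal.ofReal ε < ⊤ :=
      ENNReal.add_lt_top.2 ⟨edist_lt_top _ _, ENNReal.ofReal_lt_top⟩
    have hfin : eVariationOn c (Icc 0 1) ≠ ⊤ := (hclen.trans htop).ne
    have hV : (eVariationOn c (Icc 0 1)).toReal ≤ dist (c 0) (c 1) + ε := by
      have h2 := ENNReal.toReal_mono htop.ne hclen.le
      rw [ENNReal.toReal_add (edist_ne_top _ _) ENNReal.ofReal_ne_top,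
        ENNReal.toReal_ofReal hεpos.le] at h2
      rw [h0, h1, dist_edist]
      exact h2
    obtain ⟨t₀, ht₀, hKhit⟩ := star y c hcont h0 h1
    obtain ⟨q, hq0, hqest⟩ := markers hcont hfin hεpos.le hV ht₀
    refine ⟨c t₀, q, hKhit, hq0, ?_⟩
    intro s t h1' h2' h3'
    refine hqest s t ?_ h2' ?_
    · have hA : (n:ℝ)+1 ≤ dist (c 0) (c t₀) := by
        have hpc0 : p (c 0) = x := by rw [h0, hy]
        have hl := lip (c 0) (c t₀)
        rw [hpc0] at hl
        exact le_trans (hx _ hKhit) hl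
      linarith
    · have hB : (n:ℝ)+1 ≤ dist (c t₀) (c 1) := by
        have hpc1 : p (c 1) = x := by rw [h1, hdeck, hy]
        have hl := lip (c t₀) (c 1)
        rw [hpc1] at hl
        calc (n:ℝ)+1 ≤ dist x (p (c t₀)) := hx _ hKhit
        _ = dist (p (c t₀)) x := dist_comm _ _
        _ ≤ dist (c t₀) (c 1) := hl
      linarith
  choose kp q hkpK hq0 hqest using main
  -- ultrafilter limit
  set 𝒰 : Ultrafilter ℕ := Ultrafilter.of Filter.atTop with h𝒰
  have h𝒰le : (𝒰 : Filter ℕ) ≤ Filter.atTop := Ultrafilter.of_le _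
  obtain ⟨xstar, hxstarK, hxstar⟩ := hKcpt.ultrafilter_le_nhds
    (𝒰.map fun n => p (kp n))
    (le_principal_iff.2 (Filter.mem_map.2 (Filter.Eventually.of_forall hkpK)))
  have htendX : Filter.Tendsto (fun n => p (kp n)) 𝒰 (𝓝 xstar) := hxstar
  obtain ⟨ystar, hystar⟩ := psurj xstar
  haveI : Nonempty (p ⁻¹' {xstar}) := ⟨⟨ystar, hystar⟩⟩
  set t' := (hp xstar).toTrivialization with ht'
  have hxstarbase : xstar ∈ t'.baseSet := (hp xstar).mem_toTrivialization_baseSet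
  have hyssource : ystar ∈ t'.source := t'.mem_source.2 (by rw [hystar]; exact hxstarbase)
  set istar := (t' ystar).2 with histar
  set sec : X → Xt := fun x => t'.toOpenPartialHomeomorph.symm (x, istar) with hsec
  have hsecY : sec xstar = ystar := by
    have h2 : (xstar, istar) = t' ystar := by
      refine Prod.ext ?_ rfl
      rw [t'.coe_fst hyssource, hystar]
    rw [hsec]
    simp only [h2]
    exact t'.toOpenPartialHomeomorph.left_inv hyssource
  have hseccont : Filter.Tendsto sec (𝓝 xstar) (𝓝 ystar) := by
    have hmemtgt : (xstar, istar) ∈ t'.target := t'.mem_target.2 hxstarbase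
    have h1 : ContinuousAt (t'.toOpenPartialHomeomorph.symm) (xstar, istar) :=
      t'.toOpenPartialHomeomorph.symm.continuousAt (by
        rwa [OpenPartialHomeomorph.symm_source])
    have h2 : Filter.Tendsto (fun x : X => (x, istar)) (𝓝 xstar) (𝓝 (xstar, istar)) :=
      (continuous_id.prodMk continuous_const).tendsto xstar
    rw [← hsecY]
    exact (h1.tendsto).comp h2
  have htendz : Filter.Tendsto (fun n => sec (p (kp n))) 𝒰 (𝓝 ystar) :=
    hseccont.comp htendX
  have hhex : ∀ n, ∃ h : G, (p (kp n) ∈ t'.baseSet → h • kp n = sec (p (kp n))) := by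
    intro n
    by_cases hb : p (kp n) ∈ t'.baseSet
    · have hps : p (sec (p (kp n))) = p (kp n) := t'.proj_symm_apply' hb
      obtain ⟨h, hh⟩ := hreg (kp n) (sec (p (kp n))) hps.symm
      exact ⟨h, fun _ => hh⟩
    · exact ⟨1, fun hb' => absurd hb' hb⟩
  choose dk hdk using hhex
  set cc : ℕ → ℝ → Xt := fun n s => dk n • q n s with hcc
  have hccdist : ∀ n (s t : ℝ), dist (cc n s) (cc n t) = dist (q n s) (q n t) :=
    fun n s t => (hiso (dk n)).dist_eq _ _
  have hev1 : ∀ᶠ n in (𝒰 : Filter ℕ), p (kp n) ∈ t'.baseSet :=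
    htendX (t'.open_baseSet.mem_nhds hxstarbase)
  have hev2 : ∀ᶠ n in (𝒰 : Filter ℕ), dist (sec (p (kp n))) ystar ≤ 1 := by
    have := htendz (Metric.closedBall_mem_nhds ystar one_pos)
    filter_upwards [this] with n hn
    exact hn
  have hevs : ∀ r : ℝ, ∀ᶠ (n : ℕ) in (𝒰 : Filter ℕ), r ≤ (n:ℝ) + 1 := by
    intro r
    refine Filter.Eventually.filter_mono h𝒰le ?_
    refine Filter.eventually_atTop.2 ⟨⌈r⌉₊, fun n hn => ?_⟩
    calc r ≤ ⌈r⌉₊ := Nat.le_ceil r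
    _ ≤ (n:ℝ) := by exact_mod_cast hn
    _ ≤ (n:ℝ) + 1 := by linarith
  have hone : ∀ n : ℕ, 1/((n:ℝ)+1) ≤ 1 := by
    intro n
    rw [div_le_one (by positivity)]
    have : (0:ℝ) ≤ n := Nat.cast_nonneg n
    linarith
  have hlim : ∀ s : ℝ, ∃ z : Xt, Filter.Tendsto (fun n => cc n s) 𝒰 (𝓝 z) := by
    intro s
    have hevball : ∀ᶠ n in (𝒰 : Filter ℕ), cc n s ∈ closedBall ystar (|s| + 2) := by
      filter_upwards [hev1, hev2, hevs |s|] with n h1 h2 h3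
      have hcc0 : cc n 0 = sec (p (kp n)) := by
        rw [hcc]
        simp only [hq0 n]
        exact hdk n h1
      have habs : |s| ≤ (n:ℝ) + 1 := h3
      have hd0 : dist (cc n s) (cc n 0) ≤ |s| + 1 := by
        rw [hccdist]
        rcases le_total 0 s with hs | hs
        · have est := hqest n 0 s (by linarith [abs_nonneg s]) hs
            (by rw [abs_of_nonneg hs] at habs; exact habs)
          rw [dist_comm]
          have h5 := (abs_le.1 est).2
          have h6 := hone n
          rw [abs_of_nonneg hs]
          linarith
        · have est := hqest n s 0
            (by rw [abs_of_nonpos hs] at habs; linarith) hs (by linarith)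
          have h5 := (abs_le.1 est).2
          have h6 := hone n
          rw [abs_of_nonpos hs]
          linarith
      rw [mem_closedBall]
      calc dist (cc n s) ystar ≤ dist (cc n s) (cc n 0) + dist (cc n 0) ystar :=
        dist_triangle _ _ _
      _ ≤ (|s| + 1) + 1 := by
        refine add_le_add hd0 ?_
        rw [hcc0]; exact h2
      _ = |s| + 2 := by ring
    obtain ⟨z, -, hz⟩ := (isCompact_closedBall ystar (|s| + 2)).ultrafilter_le_nhds
      (𝒰.map fun n => cc n s) (le_principal_iff.2 (Filter.mem_map.2 hevball))
    exact ⟨z, hz⟩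
  choose C hC using hlim
  refine ⟨C, ?_⟩
  have key : ∀ s t : ℝ, s ≤ t → dist (C s) (C t) = t - s := by
    intro s t hst
    have hd : Filter.Tendsto (fun n => dist (cc n s) (cc n t)) 𝒰
        (𝓝 (dist (C s) (C t))) := (hC s).dist (hC t)
    have hd2 : Filter.Tendsto (fun n => dist (cc n s) (cc n t)) 𝒰 (𝓝 (t - s)) := by
      rw [tendsto_iff_dist_tendsto_zero]
      refine squeeze_zero' (Filter.Eventually.of_forall fun n => dist_nonneg)
        ?_ (tendsto_one_div_add_atTop_nhds_zero_nat.mono_left h𝒰le)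
      filter_upwards [hevs |s|, hevs |t|] with n h1 h2
      have hs1 : -((n:ℝ)+1) ≤ s := by
        have := neg_abs_le s; linarith
      have ht1 : t ≤ (n:ℝ)+1 := by
        have := le_abs_self t; linarith
      have est := hqest n s t hs1 hst ht1
      rw [Real.dist_eq, hccdist]
      exact est
    exact tendsto_nhds_unique hd hd2
  intro s t
  rcases le_total s t with h | h
  · rw [key s t h, abs_of_nonpos (by linarith)]; ring
  · rw [dist_comm, key t s h, abs_of_nonneg (by linarith)]
end

section
/- Let X be a compact length space and let p : X̃ → X be a regular covering map which is a local isometry between length spaces, where X̃ is connected, proper and noncompact, and the deck transformations act by isometries of X̃. Then X̃ contains a line, i.e. there exists a map γ : ℝ → X̃ with d_{X̃}(γ(s),γ(t)) = |s−t| for all s,t ∈ ℝ. -/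
set_option linter.unusedSectionVars false
set_option maxHeartbeats 1000000


open Set Metric Filter Topology

lemma exists_short_path {Y : Type*} [MetricSpace Y] (hY : IsLengthSpace Y) (x y : Y) {ε : ℝ}
    (hε : 0 < ε) :
    ∃ g : ℝ → Y, ContinuousOn g (Icc 0 1) ∧ g 0 = x ∧ g 1 = y ∧
      pathLength g < edist x y + ENNReal.ofReal ε := by
  have hfin : edist x y ≠ ⊤ := edist_ne_top x y
  have hlt : edist x y < edist x y + ENNReal.ofReal ε :=
    ENNReal.lt_add_right hfin (by simp [hε, hε.ne'])
  nth_rewrite 1 [hY x y] at hlt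
  obtain ⟨⟨g, hg, hg0, hg1⟩, hglen⟩ := iInf_lt_iff.mp hlt
  exact ⟨g, hg, hg0, hg1, hglen⟩

lemma exists_approx_mid {Y : Type*} [MetricSpace Y] (hY : IsLengthSpace Y) (x y : Y) {ε : ℝ}
    (hε : 0 < ε) :
    ∃ m : Y, dist x m = dist m y ∧ dist x m + dist m y ≤ dist x y + ε := by
  obtain ⟨g, hg, hg0, hg1, hglen⟩ := exists_short_path hY x y hε
  have hcont : ContinuousOn (fun u => dist x (g u) - dist (g u) y) (Icc 0 1) :=
    (((continuous_const.dist continuous_id).comp_continuousOn hg).sub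
      ((continuous_id.dist continuous_const).comp_continuousOn hg))
  have hmem : (0:ℝ) ∈ Icc ((fun u => dist x (g u) - dist (g u) y) 0)
      ((fun u => dist x (g u) - dist (g u) y) 1) := by
    simp only [hg0, hg1, dist_self, dist_comm x y]
    constructor <;> simp [dist_nonneg]
  obtain ⟨t, ht, hF⟩ := intermediate_value_Icc zero_le_one hcont hmem
  refine ⟨g t, by dsimp at hF; linarith [hF], ?_⟩
  have h1 : edist x (g t) ≤ eVariationOn g (Icc 0 t) := by
    rw [← hg0]
    exact eVariationOn.edist_le g (left_mem_Icc.mpr ht.1) ⟨ht.1, le_refl t⟩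
  have h2 : edist (g t) y ≤ eVariationOn g (Icc t 1) := by
    rw [← hg1]
    exact eVariationOn.edist_le g ⟨le_refl t, ht.2⟩ (right_mem_Icc.mpr ht.2)
  have hadd : eVariationOn g (Icc 0 t) + eVariationOn g (Icc t 1) = eVariationOn g (Icc 0 1) := by
    have := eVariationOn.Icc_add_Icc g (s := univ) ht.1 ht.2 (mem_univ t)
    simpa using this
  have hsum : edist x (g t) + edist (g t) y < edist x y + ENNReal.ofReal ε := by
    calc edist x (g t) + edist (g t) y ≤ eVariationOn g (Icc 0 t) + eVariationOn g (Icc t 1) :=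
          add_le_add h1 h2
      _ = pathLength g := hadd
      _ < _ := hglen
  rw [edist_dist, edist_dist, edist_dist, ← ENNReal.ofReal_add dist_nonneg dist_nonneg,
    ← ENNReal.ofReal_add dist_nonneg hε.le] at hsum
  exact (ENNReal.ofReal_lt_ofReal_iff_of_nonneg (by positivity)).mp hsum |>.le

lemma exists_midpoint {Y : Type*} [MetricSpace Y] [ProperSpace Y] (hY : IsLengthSpace Y)
    (x y : Y) : ∃ m : Y, dist x m = dist x y / 2 ∧ dist m y = dist x y / 2 := by
  set d := dist x y with hd
  have hseq : ∀ k : ℕ, ∃ m : Y, dist x m = dist m y ∧ dist x m + dist m y ≤ d + 1/(k+1) := by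
    intro k
    exact exists_approx_mid hY x y (by positivity)
  choose m hm1 hm2 using hseq
  have hball : ∀ k, m k ∈ closedBall x (d + 1) := by
    intro k
    have h1 : (1:ℝ)/(k+1) ≤ 1 := by
      rw [div_le_one (by positivity)]; norm_num
    have := hm2 k
    rw [← hm1 k] at this
    rw [mem_closedBall, dist_comm]
    nlinarith [dist_nonneg (x := x) (y := m k)]
  obtain ⟨z, _, φ, hφ, hz⟩ := (isCompact_closedBall x (d+1)).tendsto_subseq hball
  have hda : Tendsto (fun k => dist x (m (φ k))) atTop (𝓝 (dist x z)) :=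
    (tendsto_const_nhds.dist hz)
  have hdb : Tendsto (fun k => dist (m (φ k)) y) atTop (𝓝 (dist z y)) :=
    (hz.dist tendsto_const_nhds)
  have heq : dist x z = dist z y :=
    tendsto_nhds_unique hda (by simpa only [hm1] using hdb)
  have hle : dist x z + dist z y ≤ d := by
    have hsum : Tendsto (fun k => dist x (m (φ k)) + dist (m (φ k)) y) atTop
        (𝓝 (dist x z + dist z y)) := hda.add hdb
    have hub : Tendsto (fun k : ℕ => d + 1/(k+1 : ℝ)) atTop (𝓝 (d + 0)) :=
      tendsto_const_nhds.add tendsto_one_div_add_atTop_nhds_zero_nat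
    rw [add_zero] at hub
    refine le_of_tendsto_of_tendsto hsum hub (Filter.eventually_atTop.mpr ⟨0, fun k _ => ?_⟩)
    calc dist x (m (φ k)) + dist (m (φ k)) y ≤ d + 1/(φ k + 1) := hm2 (φ k)
      _ ≤ d + 1/(k+1) := by
          have hk : k ≤ φ k := hφ.le_apply
          have : (k:ℝ) + 1 ≤ (φ k : ℝ) + 1 := by
            have := (Nat.cast_le (α := ℝ)).mpr hk; linarith
          gcongr
  have hge : d ≤ dist x z + dist z y := dist_triangle x z y
  refine ⟨z, by linarith, by linarith⟩

section Chain
variable {Y : Type*} [MetricSpace Y]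

lemma chain_upper (q : ℕ → Y) (δ : ℝ) (N : ℕ) (h : ∀ k < N, dist (q k) (q (k+1)) = δ)
    (k l : ℕ) (hkl : k ≤ l) (hlN : l ≤ N) : dist (q k) (q l) ≤ ((l:ℝ) - k) * δ := by
  induction l, hkl using Nat.le_induction with
  | base => simp
  | succ l hl ih =>
    have hlN' : l ≤ N := by omega
    have h1 := ih hlN'
    have h2 : dist (q l) (q (l+1)) = δ := h l (by omega)
    have := dist_triangle (q k) (q l) (q (l+1))
    push_cast
    nlinarith [this]

lemma chain_exact (q : ℕ → Y) (δ : ℝ) (N : ℕ) (h : ∀ k < N, dist (q k) (q (k+1)) = δ)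
    (hN : dist (q 0) (q N) = (N:ℝ) * δ)
    (k l : ℕ) (hkl : k ≤ l) (hlN : l ≤ N) : dist (q k) (q l) = ((l:ℝ) - k) * δ := by
  have h1 : dist (q 0) (q k) ≤ ((k:ℝ) - (0:ℕ)) * δ := chain_upper q δ N h 0 k (by omega) (by omega)
  have h2 : dist (q l) (q N) ≤ ((N:ℝ) - l) * δ := chain_upper q δ N h l N hlN le_rfl
  have h3 : dist (q k) (q l) ≤ ((l:ℝ) - k) * δ := chain_upper q δ N h k l hkl hlN
  have h4 := dist_triangle4 (q 0) (q k) (q l) (q N)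
  push_cast at h1 ⊢
  linarith

end Chain

section Dyadic
variable {Y : Type*} [MetricSpace Y]

/-- The dyadic chain of points between `x` and `y` built from a midpoint operation. -/
noncomputable def dyadicChain (x y : Y) (mid : Y → Y → Y) : ℕ → ℕ → Y
  | 0 => fun k => if k = 0 then x else y
  | (n+1) => fun k => if k % 2 = 0 then dyadicChain x y mid n (k/2)
      else mid (dyadicChain x y mid n (k/2)) (dyadicChain x y mid n (k/2+1))

variable (x y : Y) (mid : Y → Y → Y)
  (hm1 : ∀ a b : Y, dist a (mid a b) = dist a b / 2)
  (hm2 : ∀ a b : Y, dist (mid a b) b = dist a b / 2)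

local notation "f" => dyadicChain x y mid

lemma dyadicChain_left (n : ℕ) : f n 0 = x := by
  induction n with
  | zero => simp [dyadicChain]
  | succ n ih => simp [dyadicChain, ih]

lemma dyadicChain_right (n : ℕ) : f n (2^n) = y := by
  induction n with
  | zero => simp [dyadicChain]
  | succ n ih =>
    have h1 : 2^(n+1) % 2 = 0 := by omega
    have h2 : 2^(n+1) / 2 = 2^n := by omega
    simp [dyadicChain, h1, h2, ih]

lemma dyadicChain_double (n k : ℕ) : f (n+1) (2*k) = f n k := by
  have h1 : (2*k) % 2 = 0 := by omega
  have h2 : (2*k) / 2 = k := by omega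
  simp [dyadicChain, h1, h2]

lemma dyadicChain_lift (n j k : ℕ) : f (n+j) (k * 2^j) = f n k := by
  induction j with
  | zero => simp
  | succ j ih =>
    have h1 : k * 2^(j+1) = 2 * (k * 2^j) := by ring
    have h2 : n + (j+1) = (n + j) + 1 := by omega
    rw [h2, h1, dyadicChain_double, ih]

include hm1 hm2 in
lemma dyadicChain_consec (n : ℕ) (k : ℕ) (hk : k < 2^n) :
    dist (f n k) (f n (k+1)) = dist x y / 2^n := by
  induction n generalizing k with
  | zero =>
    interval_cases k
    simp [dyadicChain]
  | succ n ih =>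
    rcases Nat.even_or_odd k with ⟨j, hj⟩ | ⟨j, hj⟩
    · subst hj
      have hjlt : j < 2^n := by
        have : 2^(n+1) = 2*2^n := by ring
        omega
      have e1 : f (n+1) (j+j) = f n j := by
        have : j + j = 2*j := by ring
        rw [this, dyadicChain_double]
      have e2 : f (n+1) (j+j+1) = mid (f n j) (f n (j+1)) := by
        have h1 : (j+j+1) % 2 = 1 := by omega
        have h2 : (j+j+1) / 2 = j := by omega
        simp [dyadicChain, h1, h2]
      rw [e1, e2, hm1, ih j hjlt]
      ring
    · subst hj
      have hjlt : j < 2^n := by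
        have : 2^(n+1) = 2*2^n := by ring
        omega
      have e1 : f (n+1) (2*j+1) = mid (f n j) (f n (j+1)) := by
        have h1 : (2*j+1) % 2 = 1 := by omega
        have h2 : (2*j+1) / 2 = j := by omega
        simp [dyadicChain, h1, h2]
      have e2 : f (n+1) (2*j+1+1) = f n (j+1) := by
        have : 2*j+1+1 = 2*(j+1) := by ring
        rw [this, dyadicChain_double]
      rw [e1, e2, hm2, ih j hjlt]
      ring

include hm1 hm2 in
lemma dyadicChain_dist (n : ℕ) (k l : ℕ) (hkl : k ≤ l) (hl : l ≤ 2^n) :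
    dist (f n k) (f n l) = ((l:ℝ) - k) * (dist x y / 2^n) := by
  apply chain_exact (f n) (dist x y / 2^n) (2^n) (fun k hk => dyadicChain_consec x y mid hm1 hm2 n k hk) _ k l hkl hl
  rw [dyadicChain_left, dyadicChain_right]
  have : ((2:ℝ)^n) ≠ 0 := by positivity
  push_cast
  field_simp

include hm1 hm2 in
lemma dyadicChain_dist' (n : ℕ) (k l : ℕ) (hk : k ≤ 2^n) (hl : l ≤ 2^n) :
    dist (f n k) (f n l) = |(k:ℝ) - l| * (dist x y / 2^n) := by
  rcases le_total k l with h | h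
  · rw [dyadicChain_dist x y mid hm1 hm2 n k l h hl, abs_sub_comm,
      abs_of_nonneg (by have := (Nat.cast_le (α := ℝ)).mpr h; linarith)]
  · rw [dist_comm, dyadicChain_dist x y mid hm1 hm2 n l k h hk,
      abs_of_nonneg (by have := (Nat.cast_le (α := ℝ)).mpr h; linarith)]

include hm1 hm2 in
lemma dyadicChain_cross (n m : ℕ) (hnm : n ≤ m) (k l : ℕ) (hk : k ≤ 2^n) (hl : l ≤ 2^m) :
    dist (f n k) (f m l) = |(k:ℝ)/2^n - (l:ℝ)/2^m| * dist x y := by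
  have hlift : f n k = f m (k * 2^(m-n)) := by
    rw [← dyadicChain_lift x y mid n (m-n) k]
    congr 1
    omega
  have hkm : k * 2^(m-n) ≤ 2^m := by
    calc k * 2^(m-n) ≤ 2^n * 2^(m-n) := by exact Nat.mul_le_mul_right _ hk
      _ = 2^m := by rw [← pow_add]; congr 1; omega
  rw [hlift, dyadicChain_dist' x y mid hm1 hm2 m _ l hkm hl]
  have h2n : ((2:ℝ)^n) ≠ 0 := by positivity
  have h2m : ((2:ℝ)^m) ≠ 0 := by positivity
  have hcast : ((k * 2^(m-n) : ℕ) : ℝ) = (k:ℝ) * 2^(m-n) := by push_cast; ring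
  have hpow : (2:ℝ)^(m-n) * 2^n = 2^m := by
    rw [← pow_add]; congr 1; omega
  have key : (k:ℝ)/2^n - (l:ℝ)/2^m = ((k:ℝ) * 2^(m-n) - l) / 2^m := by
    have h5 : (k:ℝ)/2^n = ((k:ℝ) * 2^(m-n))/2^m := by
      rw [div_eq_div_iff h2n h2m, mul_assoc, hpow]
    rw [h5, div_sub_div_same]
  rw [hcast, key, abs_div, abs_of_pos (show (0:ℝ) < 2^m by positivity)]
  ring

end Dyadic


section Geo
variable {Y : Type*} [MetricSpace Y] [ProperSpace Y]
variable (x y : Y) (mid : Y → Y → Y)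
  (hm1 : ∀ a b : Y, dist a (mid a b) = dist a b / 2)
  (hm2 : ∀ a b : Y, dist (mid a b) b = dist a b / 2)

local notation "f" => dyadicChain x y mid

lemma floor_mem (t : ℝ) (ht : t ∈ Icc (0:ℝ) 1) (n : ℕ) : ⌊t * 2^n⌋₊ ≤ 2^n := by
  have h1 : t * 2^n ≤ 2^n := by nlinarith [ht.1, ht.2, pow_pos (show (0:ℝ) < 2 by norm_num) n]
  calc ⌊t * 2^n⌋₊ ≤ ⌊((2^n : ℕ) : ℝ)⌋₊ := Nat.floor_le_floor (by push_cast; exact h1)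
    _ = 2^n := Nat.floor_natCast _

lemma floor_close (t : ℝ) (ht : t ∈ Icc (0:ℝ) 1) (n : ℕ) :
    |(⌊t * 2^n⌋₊ : ℝ)/2^n - t| ≤ 1/2^n := by
  have h2n : (0:ℝ) < 2^n := by positivity
  have h1 : (⌊t * 2^n⌋₊ : ℝ) ≤ t * 2^n := Nat.floor_le (by nlinarith [ht.1])
  have h2 : t * 2^n < ⌊t * 2^n⌋₊ + 1 := Nat.lt_floor_add_one _
  rw [abs_sub_comm, abs_of_nonneg (by rw [sub_nonneg, div_le_iff₀ h2n]; linarith)]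
  rw [sub_le_iff_le_add, ← add_div, le_div_iff₀ h2n]
  linarith

include hm1 hm2 in
lemma exists_geodesic_aux :
    ∃ σ : ℝ → Y, ∀ s ∈ Icc (0:ℝ) 1, ∀ t ∈ Icc (0:ℝ) 1,
      dist (σ s) (σ t) = |s - t| * dist x y := by
  set d := dist x y with hd
  have hd0 : (0:ℝ) ≤ d := dist_nonneg
  have bnd : ∀ s ∈ Icc (0:ℝ) 1, ∀ n m : ℕ,
      |(⌊s*2^n⌋₊:ℝ)/2^n - (⌊s*2^m⌋₊:ℝ)/2^m| ≤ 1/2^n + 1/2^m := by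
    intro s hs n m
    calc |(⌊s*2^n⌋₊:ℝ)/2^n - (⌊s*2^m⌋₊:ℝ)/2^m|
        ≤ |(⌊s*2^n⌋₊:ℝ)/2^n - s| + |s - (⌊s*2^m⌋₊:ℝ)/2^m| := abs_sub_le _ _ _
      _ ≤ 1/2^n + 1/2^m := by
          have := floor_close s hs n
          have h2 := floor_close s hs m
          rw [abs_sub_comm] at h2
          exact add_le_add this h2
  have key : ∀ s ∈ Icc (0:ℝ) 1, ∀ n m : ℕ,
      dist (f n ⌊s*2^n⌋₊) (f m ⌊s*2^m⌋₊) ≤ (1/2^n + 1/2^m) * d := by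
    intro s hs n m
    rcases le_total n m with h | h
    · rw [dyadicChain_cross x y mid hm1 hm2 n m h _ _ (floor_mem s hs n) (floor_mem s hs m)]
      exact mul_le_mul_of_nonneg_right (bnd s hs n m) hd0
    · rw [dist_comm, dyadicChain_cross x y mid hm1 hm2 m n h _ _ (floor_mem s hs m)
        (floor_mem s hs n)]
      have := mul_le_mul_of_nonneg_right (bnd s hs m n) hd0
      linarith
  have hcauchy : ∀ s ∈ Icc (0:ℝ) 1, CauchySeq (fun n => f n ⌊s*2^n⌋₊) := by
    intro s hs
    apply cauchySeq_of_le_tendsto_0 (b := fun N => (2 * d) * (1/2:ℝ)^N)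
    · intro n m N hn hm
      have h1 : (1:ℝ)/2^n ≤ 1/2^N := by
        apply one_div_le_one_div_of_le (by positivity)
        exact pow_le_pow_right₀ (by norm_num) hn
      have h2 : (1:ℝ)/2^m ≤ 1/2^N := by
        apply one_div_le_one_div_of_le (by positivity)
        exact pow_le_pow_right₀ (by norm_num) hm
      calc dist (f n ⌊s*2^n⌋₊) (f m ⌊s*2^m⌋₊) ≤ (1/2^n + 1/2^m) * d := key s hs n m
        _ ≤ (1/2^N + 1/2^N) * d := mul_le_mul_of_nonneg_right (add_le_add h1 h2) hd0
        _ = (2 * d) * (1/2:ℝ)^N := by rw [one_div_pow]; ring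
    · have h0 : Tendsto (fun N : ℕ => (1/2:ℝ)^N) atTop (𝓝 0) :=
        tendsto_pow_atTop_nhds_zero_of_lt_one (by norm_num) (by norm_num)
      simpa using h0.const_mul (2*d)
  have hex : ∀ s ∈ Icc (0:ℝ) 1, ∃ z : Y, Tendsto (fun n => f n ⌊s*2^n⌋₊) atTop (𝓝 z) :=
    fun s hs => cauchySeq_tendsto_of_complete (hcauchy s hs)
  have : Nonempty Y := ⟨x⟩
  choose! σ hσ using hex
  refine ⟨σ, fun s hs t ht => ?_⟩
  have h1 : Tendsto (fun n => dist (f n ⌊s*2^n⌋₊) (f n ⌊t*2^n⌋₊)) atTop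
      (𝓝 (dist (σ s) (σ t))) := (hσ s hs).dist (hσ t ht)
  have hconv : ∀ u, u ∈ Icc (0:ℝ) 1 → Tendsto (fun n => (⌊u*2^n⌋₊:ℝ)/2^n) atTop (𝓝 u) := by
    intro u hu
    rw [tendsto_iff_dist_tendsto_zero]
    apply squeeze_zero (fun n => dist_nonneg) (fun n => ?_)
    · have h0 : Tendsto (fun N : ℕ => (1/2:ℝ)^N) atTop (𝓝 0) :=
        tendsto_pow_atTop_nhds_zero_of_lt_one (by norm_num) (by norm_num)
      simpa [one_div_pow] using h0
    · rw [Real.dist_eq]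
      simpa [one_div] using floor_close u hu n
  have heq : ∀ n : ℕ, dist (f n ⌊s*2^n⌋₊) (f n ⌊t*2^n⌋₊)
      = |(⌊s*2^n⌋₊:ℝ)/2^n - (⌊t*2^n⌋₊:ℝ)/2^n| * d := by
    intro n
    rw [dyadicChain_dist' x y mid hm1 hm2 n _ _ (floor_mem s hs n) (floor_mem t ht n)]
    rw [div_sub_div_same, abs_div, abs_of_pos (show (0:ℝ) < 2^n by positivity)]
    ring
  have h2 : Tendsto (fun n => |(⌊s*2^n⌋₊:ℝ)/2^n - (⌊t*2^n⌋₊:ℝ)/2^n| * d) atTop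
      (𝓝 (|s - t| * d)) := (((hconv s hs).sub (hconv t ht)).abs).mul_const d
  simp only [heq] at h1
  exact tendsto_nhds_unique h1 h2

end Geo

lemma exists_geodesic {Y : Type*} [MetricSpace Y] [ProperSpace Y] (hY : IsLengthSpace Y)
    (x y : Y) :
    ∃ σ : ℝ → Y, ∀ s ∈ Icc (0:ℝ) 1, ∀ t ∈ Icc (0:ℝ) 1,
      dist (σ s) (σ t) = |s - t| * dist x y := by
  choose mid h1 h2 using fun a b : Y => exists_midpoint hY a b
  exact exists_geodesic_aux x y mid h1 h2

lemma IsLengthSpace.joined {Y : Type*} [MetricSpace Y] (hY : IsLengthSpace Y) (x y : Y) :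
    Joined x y := by
  obtain ⟨g, hg, hg0, hg1, -⟩ := exists_short_path hY x y one_pos
  refine ⟨⟨⟨fun t => g ↑t, ?_⟩, ?_, ?_⟩⟩
  · exact hg.comp_continuous continuous_subtype_val (fun t => t.2)
  · simpa using hg0
  · simpa using hg1

lemma surj_of_covering {X Xt : Type*} [MetricSpace X] [MetricSpace Xt] [Nonempty Xt]
    (hX : IsLengthSpace X) (p : Xt → X) (hp : IsCoveringMap p) : Function.Surjective p := by
  have hneX : Nonempty X := ⟨p (Classical.arbitrary Xt)⟩
  have hpc : PathConnectedSpace X := ⟨hneX, fun x y => hX.joined x y⟩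
  have hcs : ConnectedSpace X := hpc.connectedSpace
  have hclosed : IsClosed (Set.range p) := by
    rw [← isOpen_compl_iff, isOpen_iff_mem_nhds]
    intro x hx
    obtain ⟨-, U, hxU, hUo, -, H, -⟩ := hp x
    refine Filter.mem_of_superset (hUo.mem_nhds hxU) (fun z hz => ?_)
    intro hzr
    obtain ⟨w, rfl⟩ := hzr
    have hw : w ∈ p ⁻¹' U := hz
    have : IsEmpty ↥(p ⁻¹' {x}) := ⟨fun ⟨w', hw'⟩ => hx ⟨w', hw'⟩⟩
    exact this.elim (H ⟨w, hw⟩).2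
  have hclopen : IsClopen (Set.range p) := ⟨hclosed, hp.isOpenMap.isOpen_range⟩
  have : Set.range p = univ := hclopen.eq_univ (range_nonempty p)
  exact Set.range_eq_univ.mp this

lemma orbit_cocompact {X Xt : Type*} [MetricSpace X] [MetricSpace Xt] [CompactSpace X]
    [Nonempty Xt] (p : Xt → X) (hp : IsCoveringMap p) (hsurj : Function.Surjective p)
    (G : Type*) [Group G] [MulAction G Xt]
    (hiso : ∀ g : G, Isometry (fun y : Xt => g • y))
    (hreg : ∀ y₁ y₂ : Xt, p y₁ = p y₂ → ∃ g : G, g • y₁ = y₂) (x₀ : Xt) :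
    ∃ C : ℝ, ∀ y : Xt, ∃ g : G, dist y (g • x₀) ≤ C := by
  set A : Set Xt := Set.range (fun g : G => g • x₀) with hA
  have hAne : A.Nonempty := ⟨(1:G) • x₀, ⟨1, rfl⟩⟩
  have himg : ∀ g : G, (fun y : Xt => g • y) '' A = A := by
    intro g; ext a; constructor
    · rintro ⟨b, ⟨g', rfl⟩, rfl⟩
      exact ⟨g * g', (smul_smul g g' x₀).symm⟩
    · rintro ⟨g', rfl⟩
      exact ⟨g⁻¹ • (g' • x₀), ⟨g⁻¹ * g', (smul_smul g⁻¹ g' x₀).symm⟩, smul_inv_smul g _⟩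
  have hinveq : ∀ y₁ y₂ : Xt, p y₁ = p y₂ → infDist y₁ A = infDist y₂ A := by
    intro y₁ y₂ hpy
    obtain ⟨g, hg⟩ := hreg y₁ y₂ hpy
    rw [← hg]
    calc infDist y₁ A = infDist (g • y₁) ((fun y : Xt => g • y) '' A) :=
          (infDist_image (hiso g)).symm
      _ = infDist (g • y₁) A := by rw [himg]
  let rbar : X → ℝ := fun x => infDist ((hsurj x).choose) A
  have hbar : ∀ y, rbar (p y) = infDist y A := fun y => hinveq _ y ((hsurj (p y)).choose_spec)
  have hcont : Continuous rbar := by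
    rw [(hp.isQuotientMap hsurj).continuous_iff]
    have h : (rbar ∘ p) = fun y => infDist y A := funext hbar
    rw [h]
    exact continuous_infDist_pt A
  have hneX : Nonempty X := ⟨p (Classical.arbitrary Xt)⟩
  obtain ⟨z, -, hz⟩ := isCompact_univ.exists_isMaxOn univ_nonempty hcont.continuousOn
  refine ⟨rbar z + 1, fun y => ?_⟩
  have h1 : infDist y A ≤ rbar z := (hbar y) ▸ hz (mem_univ (p y))
  have h2 : infDist y A < rbar z + 1 := by linarith
  obtain ⟨a, ⟨g, rfl⟩, hd⟩ := (infDist_lt_iff hAne).mp h2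
  exact ⟨g, hd.le⟩

lemma exists_far {Y : Type*} [MetricSpace Y] [ProperSpace Y] (h : ¬ CompactSpace Y) (x₀ : Y)
    (R : ℝ) : ∃ y : Y, R ≤ dist x₀ y := by
  by_contra hc
  push_neg at hc
  apply h
  constructor
  have hsub : (univ : Set Y) ⊆ closedBall x₀ R := by
    intro y _
    rw [mem_closedBall, dist_comm]
    exact (hc y).le
  exact (isCompact_closedBall x₀ R).of_isClosed_subset isClosed_univ hsub

/-- A connected, proper, noncompact regular covering space (with deck transformations
acting by isometries, the covering map being a local isometry) of a compact length space
contains a line. -/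
theorem stmt_10 {X Xt : Type*} [MetricSpace X] [MetricSpace Xt]
    [CompactSpace X] [ConnectedSpace Xt] [ProperSpace Xt]
    (hX : IsLengthSpace X) (hXt : IsLengthSpace Xt)
    (hnc : ¬ CompactSpace Xt)
    (p : Xt → X) (hp : IsCoveringMap p) (hloc : IsLocalIsometry p)
    (G : Type*) [Group G] [MulAction G Xt]
    (hiso : ∀ g : G, Isometry (fun y : Xt => g • y))
    (hdeck : ∀ (g : G) (y : Xt), p (g • y) = p y)
    (hreg : ∀ y₁ y₂ : Xt, p y₁ = p y₂ → ∃ g : G, g • y₁ = y₂) :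
    ∃ γ : ℝ → Xt, ∀ s t : ℝ, dist (γ s) (γ t) = |s - t| := by
  classical
  set x₀ : Xt := Classical.arbitrary Xt with hx₀
  have hsurj : Function.Surjective p := surj_of_covering hX p hp
  obtain ⟨C, hC⟩ := orbit_cocompact p hp hsurj G hiso hreg x₀
  have hfar : ∀ n : ℕ, ∃ y : Xt, ((n:ℝ)+1) ≤ dist x₀ y := fun n => exists_far hnc x₀ _
  choose yy hy using hfar
  have hgeo := fun n => exists_geodesic hXt x₀ (yy n)
  choose σ hσ using hgeo
  set dd : ℕ → ℝ := fun n => dist x₀ (yy n) with hdd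
  have hdpos : ∀ n, 0 < dd n := fun n =>
    lt_of_lt_of_le (by positivity) (hy n)
  have hdn : ∀ n : ℕ, (n:ℝ) + 1 ≤ dd n := hy
  choose gg hgg using fun n => hC (σ n (1/2))
  set cl : ℝ → ℝ := fun u => max 0 (min 1 u) with hcl
  have hclmem : ∀ u, cl u ∈ Icc (0:ℝ) 1 :=
    fun u => ⟨le_max_left _ _, max_le (by norm_num) (min_le_left _ _)⟩
  have hclid : ∀ u, 0 ≤ u → u ≤ 1 → cl u = u := by
    intro u h0 h1
    rw [hcl]
    simp only [min_eq_right h1, max_eq_right h0]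
  have hclclose : ∀ u : ℝ, |cl u - 1/2| ≤ |u - 1/2| := by
    intro u
    rcases le_total u 0 with h | h
    · have e : cl u = 0 := by
        rw [hcl]; simp only [min_eq_right (h.trans zero_le_one), max_eq_left h]
      rw [e, abs_of_nonpos (by norm_num), abs_of_nonpos (by linarith)]
      linarith
    · rcases le_total 1 u with h2 | h2
      · have e : cl u = 1 := by
          rw [hcl]; simp only [min_eq_left h2, max_eq_right (zero_le_one (α := ℝ))]
        rw [e, abs_of_nonneg (by norm_num), abs_of_nonneg (by linarith)]
        linarith
      · rw [hclid u h h2]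
  set ρ : ℕ → ℝ → Xt := fun n t => (gg n)⁻¹ • σ n (cl (1/2 + t / dd n)) with hρ
  have hdistg : ∀ (g : G) (a b : Xt), dist (g • a) (g • b) = dist a b :=
    fun g a b => (hiso g).dist_eq a b
  have hρρ : ∀ n s t, dist (ρ n s) (ρ n t)
      = |cl (1/2 + s/dd n) - cl (1/2 + t/dd n)| * dd n := by
    intro n s t
    calc dist (ρ n s) (ρ n t)
        = dist (σ n (cl (1/2 + s/dd n))) (σ n (cl (1/2 + t/dd n))) := hdistg _ _ _
      _ = |cl (1/2 + s/dd n) - cl (1/2 + t/dd n)| * dd n :=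
          hσ n _ (hclmem _) _ (hclmem _)
  have hcl12 : ∀ n, cl (1/2 + 0/dd n) = 1/2 := by
    intro n
    rw [zero_div, add_zero]
    exact hclid _ (by norm_num) (by norm_num)
  have hball : ∀ t n, dist (ρ n t) x₀ ≤ |t| + C := by
    intro t n
    have h0 : dist (ρ n 0) x₀ ≤ C := by
      have e1 : ρ n 0 = (gg n)⁻¹ • σ n (1/2) := by rw [hρ]; simp only [hcl12]
      have e2 : x₀ = (gg n)⁻¹ • (gg n • x₀) := (inv_smul_smul _ _).symm
      rw [e1]
      calc dist ((gg n)⁻¹ • σ n (1/2)) x₀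
          = dist ((gg n)⁻¹ • σ n (1/2)) ((gg n)⁻¹ • (gg n • x₀)) := by rw [← e2]
        _ = dist (σ n (1/2)) (gg n • x₀) := hdistg _ _ _
        _ ≤ C := hgg n
    have h1 : dist (ρ n t) (ρ n 0) ≤ |t| := by
      rw [hρρ, hcl12]
      have hc := hclclose (1/2 + t/dd n)
      have hc' : |cl (1/2 + t/dd n) - 1/2| ≤ |t/dd n| := by
        calc |cl (1/2 + t/dd n) - 1/2| ≤ |(1/2 + t/dd n) - 1/2| := hc
          _ = |t/dd n| := by congr 1; ring
      calc |cl (1/2 + t/dd n) - 1/2| * dd n ≤ |t/dd n| * dd n :=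
            mul_le_mul_of_nonneg_right hc' (hdpos n).le
        _ = |t| := by
            rw [abs_div, abs_of_pos (hdpos n), div_mul_cancel₀ _ (hdpos n).ne']
    calc dist (ρ n t) x₀ ≤ dist (ρ n t) (ρ n 0) + dist (ρ n 0) x₀ := dist_triangle _ _ _
      _ ≤ |t| + C := add_le_add h1 h0
  have hexact : ∀ s t : ℝ, ∀ᶠ n in atTop, dist (ρ n s) (ρ n t) = |s - t| := by
    intro s t
    rw [eventually_atTop]
    refine ⟨⌈2*|s| + 2*|t|⌉₊, fun n hn => ?_⟩
    have hNle : 2*|s| + 2*|t| ≤ (n:ℝ) := le_trans (Nat.le_ceil _) (Nat.cast_le.mpr hn)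
    have hds : 2*|s| ≤ dd n := by nlinarith [hdn n, abs_nonneg s, abs_nonneg t]
    have hdt : 2*|t| ≤ dd n := by nlinarith [hdn n, abs_nonneg s, abs_nonneg t]
    have hmem : ∀ u : ℝ, 2*|u| ≤ dd n → (0 ≤ 1/2 + u/dd n ∧ 1/2 + u/dd n ≤ 1) := by
      intro u hu
      have habs := abs_le.mp (show |u| ≤ dd n / 2 by linarith)
      constructor
      · have : -(1/2 : ℝ) ≤ u / dd n := by
          rw [le_div_iff₀ (hdpos n)]
          nlinarith [habs.1]
        linarith
      · have : u / dd n ≤ 1/2 := by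
          rw [div_le_iff₀ (hdpos n)]
          nlinarith [habs.2]
        linarith
    obtain ⟨hs0, hs1⟩ := hmem s hds
    obtain ⟨ht0, ht1⟩ := hmem t hdt
    rw [hρρ, hclid _ hs0 hs1, hclid _ ht0 ht1]
    have e : (1/2 + s/dd n) - (1/2 + t/dd n) = (s - t)/dd n := by ring
    rw [e, abs_div, abs_of_pos (hdpos n), div_mul_cancel₀ _ (hdpos n).ne']
  obtain ⟨U, hU⟩ := Filter.exists_ultrafilter_le (atTop : Filter ℕ)
  have hlim : ∀ t : ℝ, ∃ z : Xt, Tendsto (fun n => ρ n t) (↑U) (𝓝 z) := by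
    intro t
    have hK : IsCompact (closedBall x₀ (|t| + C)) := isCompact_closedBall _ _
    have hle : ↑(U.map (fun n => ρ n t)) ≤ 𝓟 (closedBall x₀ (|t| + C)) := by
      rw [Ultrafilter.coe_map, le_principal_iff, mem_map]
      exact Filter.univ_mem' (fun n => by simpa [mem_closedBall] using hball t n)
    obtain ⟨z, -, hz⟩ := hK.ultrafilter_le_nhds (U.map _) hle
    refine ⟨z, ?_⟩
    rw [Tendsto, ← Ultrafilter.coe_map]
    exact hz
  choose γ hγ using hlim
  refine ⟨γ, fun s t => ?_⟩
  have h1 : Tendsto (fun n => dist (ρ n s) (ρ n t)) (↑U) (𝓝 (dist (γ s) (γ t))) :=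
    (hγ s).dist (hγ t)
  have h2 : Tendsto (fun n => dist (ρ n s) (ρ n t)) (↑U) (𝓝 |s - t|) := by
    have he : ∀ᶠ n in (↑U : Filter ℕ), dist (ρ n s) (ρ n t) = |s - t| :=
      (hexact s t).filter_mono hU
    exact Tendsto.congr' (by filter_upwards [he] with n hn; exact hn.symm) tendsto_const_nhds
  exact tendsto_nhds_unique h1 h2
end
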